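/- arXiv:2603.16573 — 7 statements merged into one kernel-verified Lean document; each statement's English description precedes it below -/
import Mathlib

section
/- Let f : ℝ^n → ℝ be differentiable at x, let g : ℝ^m → ℝ ∪ {+∞} be proper and convex with g(Ax) finite, and let A ∈ ℝ^{m×n}. Let c₁ > 0 and let v, s̃ ∈ ℝ^n and q_v, q_s ∈ ℝ with q_v ≥ c₁ and q_s ≥ c₁. Suppose α₁ minimizes α ↦ ∇f(x)ᵀv·α + g(Ax + αAv) + (q_v/2)‖v‖²α² over ℝ, α₂ minimizes α ↦ ∇f(x)ᵀs̃·α + g(Ax + αAs̃) + (q_s/2)‖s̃‖²α² over ℝ, and, with d̃ = α₁v + α₂s̃ and q_d = q_v‖α₁v‖² + q_s‖α₂s̃‖², α₃ minimizes α ↦ ∇f(x)ᵀd̃·α + g(Ax + αAd̃) + (q_d/2)α² over ℝ. Then the direction d = α₃d̃ satisfies ∇f(x)ᵀd + g(Ax + Ad) − g(Ax) ≤ −(c₁/2)‖d‖². -/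
open scoped RealInnerProductSpace

/-- If `α₁, α₂, α₃` are the minimizers of the three one-dimensional
subproblems along `v`, `s̃` and `d̃ = α₁v + α₂s̃` with curvature parameters `q_v, q_s ≥ c₁ > 0`,
then the direction `d = α₃d̃` satisfies the sufficient decrease condition
`∇f(x)ᵀd + g(Ax + Ad) − g(Ax) ≤ −(c₁/2)‖d‖²`. -/
theorem stmt1 {n m : ℕ}
    (f : EuclideanSpace ℝ (Fin n) → ℝ) (x : EuclideanSpace ℝ (Fin n))
    (hf : DifferentiableAt ℝ f x)
    (g : EuclideanSpace ℝ (Fin m) → EReal)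
    (hg_proper : ∃ z, g z ≠ ⊤)
    (hg_ne_bot : ∀ z, g z ≠ ⊥)
    (hg_convex : ∀ u w : EuclideanSpace ℝ (Fin m), ∀ t : ℝ, 0 ≤ t → t ≤ 1 →
        g (t • u + (1 - t) • w) ≤ (t : EReal) * g u + ((1 - t : ℝ) : EReal) * g w)
    (A : Matrix (Fin m) (Fin n) ℝ)
    (hgAx : g (Matrix.toEuclideanLin A x) ≠ ⊤)
    (c₁ : ℝ) (hc₁ : 0 < c₁)
    (v s : EuclideanSpace ℝ (Fin n))
    (qv qs : ℝ) (hqv : c₁ ≤ qv) (hqs : c₁ ≤ qs)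
    (α₁ α₂ α₃ : ℝ)
    (hα₁ : ∀ α : ℝ,
        ((⟪gradient f x, v⟫ * α₁ + qv / 2 * ‖v‖ ^ 2 * α₁ ^ 2 : ℝ) : EReal)
            + g (Matrix.toEuclideanLin A x + α₁ • Matrix.toEuclideanLin A v)
          ≤ ((⟪gradient f x, v⟫ * α + qv / 2 * ‖v‖ ^ 2 * α ^ 2 : ℝ) : EReal)
            + g (Matrix.toEuclideanLin A x + α • Matrix.toEuclideanLin A v))
    (hα₂ : ∀ α : ℝ,
        ((⟪gradient f x, s⟫ * α₂ + qs / 2 * ‖s‖ ^ 2 * α₂ ^ 2 : ℝ) : EReal)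
            + g (Matrix.toEuclideanLin A x + α₂ • Matrix.toEuclideanLin A s)
          ≤ ((⟪gradient f x, s⟫ * α + qs / 2 * ‖s‖ ^ 2 * α ^ 2 : ℝ) : EReal)
            + g (Matrix.toEuclideanLin A x + α • Matrix.toEuclideanLin A s))
    (dtilde : EuclideanSpace ℝ (Fin n)) (hdtilde : dtilde = α₁ • v + α₂ • s)
    (qd : ℝ) (hqd : qd = qv * ‖α₁ • v‖ ^ 2 + qs * ‖α₂ • s‖ ^ 2)
    (hα₃ : ∀ α : ℝ,
        ((⟪gradient f x, dtilde⟫ * α₃ + qd / 2 * α₃ ^ 2 : ℝ) : EReal)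
            + g (Matrix.toEuclideanLin A x + α₃ • Matrix.toEuclideanLin A dtilde)
          ≤ ((⟪gradient f x, dtilde⟫ * α + qd / 2 * α ^ 2 : ℝ) : EReal)
            + g (Matrix.toEuclideanLin A x + α • Matrix.toEuclideanLin A dtilde))
    (d : EuclideanSpace ℝ (Fin n)) (hd : d = α₃ • dtilde) :
    ((⟪gradient f x, d⟫ : ℝ) : EReal)
        + g (Matrix.toEuclideanLin A x + Matrix.toEuclideanLin A d)
        - g (Matrix.toEuclideanLin A x)
      ≤ ((-(c₁ / 2) * ‖d‖ ^ 2 : ℝ) : EReal) := by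
  classical
  obtain ⟨a, ha⟩ : ∃ a : ℝ, a = ⟪gradient f x, dtilde⟫ := ⟨_, rfl⟩
  rw [← ha] at hα₃
  have hg0_bot : g (Matrix.toEuclideanLin A x) ≠ ⊥ := hg_ne_bot _
  obtain ⟨r₀, hr₀⟩ : ∃ r : ℝ, g (Matrix.toEuclideanLin A x) = (r : EReal) :=
    ⟨(g (Matrix.toEuclideanLin A x)).toReal, (EReal.coe_toReal hgAx hg0_bot).symm⟩
  have hg3_bot : g (Matrix.toEuclideanLin A x + α₃ • Matrix.toEuclideanLin A dtilde) ≠ ⊥ :=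
    hg_ne_bot _
  have hg3_top : g (Matrix.toEuclideanLin A x + α₃ • Matrix.toEuclideanLin A dtilde) ≠ ⊤ := by
    intro htop
    have h0 := hα₃ 0
    rw [zero_smul, add_zero, hr₀, htop,
      EReal.add_top_of_ne_bot (EReal.coe_ne_bot _), ← EReal.coe_add] at h0
    exact EReal.coe_ne_top _ (top_le_iff.mp h0)
  obtain ⟨r₃, hr₃⟩ : ∃ r : ℝ,
      g (Matrix.toEuclideanLin A x + α₃ • Matrix.toEuclideanLin A dtilde) = (r : EReal) :=
    ⟨_, (EReal.coe_toReal hg3_top hg3_bot).symm⟩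
  have hqd0 : 0 ≤ qd := by
    rw [hqd]; nlinarith [sq_nonneg ‖α₁ • v‖, sq_nonneg ‖α₂ • s‖]
  -- key strong-convexity inequality from minimality, for each small t
  have key : ∀ t : ℝ, 0 < t → t ≤ 1 →
      a * α₃ + qd / 2 * (2 - t) * α₃ ^ 2 + r₃ ≤ r₀ := by
    intro t ht ht1
    have hmid := hα₃ ((1 - t) * α₃)
    have hconv := hg_convex (Matrix.toEuclideanLin A x)
      (Matrix.toEuclideanLin A x + α₃ • Matrix.toEuclideanLin A dtilde) t ht.le ht1
    have harg : t • (Matrix.toEuclideanLin A x)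
        + (1 - t) • (Matrix.toEuclideanLin A x + α₃ • Matrix.toEuclideanLin A dtilde)
        = Matrix.toEuclideanLin A x + ((1 - t) * α₃) • Matrix.toEuclideanLin A dtilde := by
      module
    rw [harg, hr₀, hr₃] at hconv
    rw [hr₃] at hmid
    have hchain := hmid.trans (add_le_add le_rfl hconv)
    have hreal : a * α₃ + qd / 2 * α₃ ^ 2 + r₃
        ≤ (a * ((1 - t) * α₃) + qd / 2 * ((1 - t) * α₃) ^ 2) + (t * r₀ + (1 - t) * r₃) := by
      exact_mod_cast hchain
    have h' : t * (a * α₃ + qd / 2 * (2 - t) * α₃ ^ 2 + r₃) ≤ t * r₀ := by nlinarith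
    exact le_of_mul_le_mul_left h' ht
  clear hα₁ hα₂ hα₃ hg_convex hg_proper hg_ne_bot hf hgAx hg0_bot hg3_bot hg3_top
  -- take the limit t → 0⁺
  have key2 : a * α₃ + qd * α₃ ^ 2 + r₃ ≤ r₀ := by
    have hK : 0 ≤ qd / 2 * α₃ ^ 2 := by positivity
    refine le_of_forall_pos_le_add ?_
    intro ε hε
    set K : ℝ := qd / 2 * α₃ ^ 2 with hKdef
    have htpos : 0 < min 1 (ε / (K + 1)) := by
      apply lt_min one_pos; positivity
    have ht1 : min 1 (ε / (K + 1)) ≤ 1 := min_le_left _ _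
    have hk := key _ htpos ht1
    have hKt : K * min 1 (ε / (K + 1)) ≤ ε := by
      calc K * min 1 (ε / (K + 1)) ≤ K * (ε / (K + 1)) :=
            mul_le_mul_of_nonneg_left (min_le_right _ _) hK
        _ ≤ ε := by
            rw [div_eq_mul_inv]
            have h2 : K * (ε * (K + 1)⁻¹) = ε * (K * (K + 1)⁻¹) := by ring
            rw [h2]
            have h1 : K * (K + 1)⁻¹ ≤ 1 := by
              rw [mul_inv_le_iff₀ (by positivity)]; linarith
            nlinarith
    nlinarith [hk, hKt]
  -- lower bound on qd
  have hnle : ‖dtilde‖ ≤ ‖α₁ • v‖ + ‖α₂ • s‖ := by rw [hdtilde]; exact norm_add_le _ _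
  obtain ⟨p, hp⟩ : ∃ p : ℝ, p = ‖α₁ • v‖ := ⟨_, rfl⟩
  obtain ⟨q, hq⟩ : ∃ q : ℝ, q = ‖α₂ • s‖ := ⟨_, rfl⟩
  obtain ⟨w, hw⟩ : ∃ w : ℝ, w = ‖dtilde‖ := ⟨_, rfl⟩
  rw [← hp, ← hq, ← hw] at hnle
  rw [← hp, ← hq] at hqd
  have hp0 : 0 ≤ p := hp ▸ norm_nonneg _
  have hq0 : 0 ≤ q := hq ▸ norm_nonneg _
  have hw0 : 0 ≤ w := hw ▸ norm_nonneg _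
  have hqdge : c₁ / 2 * w ^ 2 ≤ qd := by
    rw [hqd]
    have h1 : w ^ 2 ≤ (p + q) ^ 2 := pow_le_pow_left₀ hw0 hnle 2
    have h0 : c₁ * w ^ 2 ≤ c₁ * (p + q) ^ 2 := mul_le_mul_of_nonneg_left h1 hc₁.le
    have h2 : c₁ * (p + q) ^ 2 + c₁ * (p - q) ^ 2 = 2 * (c₁ * p ^ 2) + 2 * (c₁ * q ^ 2) := by
      ring
    have h5 : 0 ≤ c₁ * (p - q) ^ 2 := by positivity
    have h3 : c₁ * p ^ 2 ≤ qv * p ^ 2 := mul_le_mul_of_nonneg_right hqv (sq_nonneg p)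
    have h4 : c₁ * q ^ 2 ≤ qs * q ^ 2 := mul_le_mul_of_nonneg_right hqs (sq_nonneg q)
    linarith
  -- rewrite the goal
  have hAd : Matrix.toEuclideanLin A d = α₃ • Matrix.toEuclideanLin A dtilde := by
    rw [hd, map_smul]
  have hinner : ⟪gradient f x, d⟫ = α₃ * a := by
    rw [hd, real_inner_smul_right, ha]
  have hnormd : ‖d‖ ^ 2 = α₃ ^ 2 * w ^ 2 := by
    rw [hd, norm_smul, mul_pow, Real.norm_eq_abs, sq_abs, hw]
  rw [hAd, hr₃, hr₀, hinner, hnormd]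
  clear hp hq hw ha hd hdtilde hnle hqd
  have hfinal : α₃ * a + r₃ - r₀ ≤ -(c₁ / 2) * (α₃ ^ 2 * w ^ 2) := by
    have h1 : c₁ / 2 * w ^ 2 * α₃ ^ 2 ≤ qd * α₃ ^ 2 :=
      mul_le_mul_of_nonneg_right hqdge (sq_nonneg _)
    linarith [key2, h1]
  rw [← EReal.coe_add, ← EReal.coe_sub]
  exact EReal.coe_le_coe_iff.mpr hfinal
end

section
/- Let f : ℝ^n → ℝ be differentiable at x, let g : ℝ^m → ℝ ∪ {+∞} be proper and convex with g(Ax) finite, let A ∈ ℝ^{m×n}, and let constants 0 < c₁ ≤ c₂ and c₃ > 0 be given. Let P ∈ ℝ^{n×n} be symmetric with P ⪰ c₃I_n, and let v be a minimizer of v ↦ ∇f(x)ᵀv + g(Ax + Av) + (1/2)‖v‖²_P over ℝ^n. Let s̃ ∈ ℝ^n and q_v, q_s ∈ ℝ with c₁ ≤ q_v ≤ c₂ and q_s ≥ c₁. Suppose α₁ minimizes α ↦ ∇f(x)ᵀv·α + g(Ax + αAv) + (q_v/2)‖v‖²α² over ℝ, α₂ minimizes α ↦ ∇f(x)ᵀs̃·α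 + g(Ax + αAs̃) + (q_s/2)‖s̃‖²α² over ℝ, and, with d̃ = α₁v + α₂s̃ and q_d = q_v‖α₁v‖² + q_s‖α₂s̃‖², α₃ minimizes α ↦ ∇f(x)ᵀd̃·α + g(Ax + αAd̃) + (q_d/2)α² over ℝ. Then the direction d = α₃d̃ satisfies ∇f(x)ᵀd + g(Ax + Ad) − g(Ax) ≤ −(c₃·min{1, c₃/c₂}/4)·‖v‖². -/
open scoped RealInnerProductSpace

theorem sigma_ge {n : ℕ} (c₃ : ℝ) (P : Matrix (Fin n) (Fin n) ℝ)
    (hP : (P - c₃ • (1 : Matrix (Fin n) (Fin n) ℝ)).PosSemidef)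
    (v : EuclideanSpace ℝ (Fin n)) :
    c₃ * ‖v‖^2 ≤ ⟪v, Matrix.toEuclideanLin P v⟫ := by
  have h := hP.re_dotProduct_nonneg (star ((WithLp.equiv 2 (Fin n → ℝ)) v))
  have hnorm : ‖v‖^2 = ⟪v, v⟫ := (real_inner_self_eq_norm_sq v).symm
  simp only [RCLike.star_def, starRingEnd_apply, star_star, RCLike.re_to_real] at h
  rw [hnorm]
  simp only [PiLp.inner_apply, RCLike.inner_apply, starRingEnd_apply, star_trivial,
    Matrix.toEuclideanLin_apply] at *
  simp only [Matrix.sub_mulVec, Matrix.smul_mulVec, Matrix.one_mulVec,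
    dotProduct_sub, dotProduct_smul] at h
  simp only [dotProduct, smul_eq_mul, Finset.mul_sum, Pi.sub_apply, Pi.smul_apply,
    mul_sub, sub_nonneg] at h
  rw [Finset.mul_sum]
  exact h.trans_eq (Finset.sum_congr rfl fun i _ => mul_comm _ _)

set_option maxHeartbeats 1000000 in
/-- With `v` the preconditioned proximal gradient direction (`P ⪰ c₃Iₙ`),
`c₁ ≤ q_v ≤ c₂`, `q_s ≥ c₁`, and `α₁, α₂, α₃` the minimizers of the three one-dimensional
subproblems, the direction `d = α₃d̃` satisfies
`∇f(x)ᵀd + g(Ax + Ad) − g(Ax) ≤ −(c₃·min{1, c₃/c₂}/4)·‖v‖²`. -/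
theorem stmt2 {n m : ℕ}
    (f : EuclideanSpace ℝ (Fin n) → ℝ) (x : EuclideanSpace ℝ (Fin n))
    (hf : DifferentiableAt ℝ f x)
    (g : EuclideanSpace ℝ (Fin m) → EReal)
    (hg_proper : ∃ z, g z ≠ ⊤)
    (hg_ne_bot : ∀ z, g z ≠ ⊥)
    (hg_convex : ∀ u w : EuclideanSpace ℝ (Fin m), ∀ t : ℝ, 0 ≤ t → t ≤ 1 →
        g (t • u + (1 - t) • w) ≤ (t : EReal) * g u + ((1 - t : ℝ) : EReal) * g w)
    (A : Matrix (Fin m) (Fin n) ℝ)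
    (hgAx : g (Matrix.toEuclideanLin A x) ≠ ⊤)
    (c₁ c₂ c₃ : ℝ) (hc₁ : 0 < c₁) (hc₁₂ : c₁ ≤ c₂) (hc₃ : 0 < c₃)
    (P : Matrix (Fin n) (Fin n) ℝ) (hPsymm : P.IsSymm)
    (hP : (P - c₃ • (1 : Matrix (Fin n) (Fin n) ℝ)).PosSemidef)
    (v : EuclideanSpace ℝ (Fin n))
    (hv : ∀ w : EuclideanSpace ℝ (Fin n),
        ((⟪gradient f x, v⟫ + (1 / 2) * ⟪v, Matrix.toEuclideanLin P v⟫ : ℝ) : EReal)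
            + g (Matrix.toEuclideanLin A x + Matrix.toEuclideanLin A v)
          ≤ ((⟪gradient f x, w⟫ + (1 / 2) * ⟪w, Matrix.toEuclideanLin P w⟫ : ℝ) : EReal)
            + g (Matrix.toEuclideanLin A x + Matrix.toEuclideanLin A w))
    (s : EuclideanSpace ℝ (Fin n))
    (qv qs : ℝ) (hqv₁ : c₁ ≤ qv) (hqv₂ : qv ≤ c₂) (hqs : c₁ ≤ qs)
    (α₁ α₂ α₃ : ℝ)
    (hα₁ : ∀ α : ℝ,
        ((⟪gradient f x, v⟫ * α₁ + qv / 2 * ‖v‖ ^ 2 * α₁ ^ 2 : ℝ) : EReal)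
            + g (Matrix.toEuclideanLin A x + α₁ • Matrix.toEuclideanLin A v)
          ≤ ((⟪gradient f x, v⟫ * α + qv / 2 * ‖v‖ ^ 2 * α ^ 2 : ℝ) : EReal)
            + g (Matrix.toEuclideanLin A x + α • Matrix.toEuclideanLin A v))
    (hα₂ : ∀ α : ℝ,
        ((⟪gradient f x, s⟫ * α₂ + qs / 2 * ‖s‖ ^ 2 * α₂ ^ 2 : ℝ) : EReal)
            + g (Matrix.toEuclideanLin A x + α₂ • Matrix.toEuclideanLin A s)
          ≤ ((⟪gradient f x, s⟫ * α + qs / 2 * ‖s‖ ^ 2 * α ^ 2 : ℝ) : EReal)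
            + g (Matrix.toEuclideanLin A x + α • Matrix.toEuclideanLin A s))
    (dtilde : EuclideanSpace ℝ (Fin n)) (hdtilde : dtilde = α₁ • v + α₂ • s)
    (qd : ℝ) (hqd : qd = qv * ‖α₁ • v‖ ^ 2 + qs * ‖α₂ • s‖ ^ 2)
    (hα₃ : ∀ α : ℝ,
        ((⟪gradient f x, dtilde⟫ * α₃ + qd / 2 * α₃ ^ 2 : ℝ) : EReal)
            + g (Matrix.toEuclideanLin A x + α₃ • Matrix.toEuclideanLin A dtilde)
          ≤ ((⟪gradient f x, dtilde⟫ * α + qd / 2 * α ^ 2 : ℝ) : EReal)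
            + g (Matrix.toEuclideanLin A x + α • Matrix.toEuclideanLin A dtilde))
    (d : EuclideanSpace ℝ (Fin n)) (hd : d = α₃ • dtilde) :
    ((⟪gradient f x, d⟫ : ℝ) : EReal)
        + g (Matrix.toEuclideanLin A x + Matrix.toEuclideanLin A d)
        - g (Matrix.toEuclideanLin A x)
      ≤ ((-(c₃ * min 1 (c₃ / c₂) / 4) * ‖v‖ ^ 2 : ℝ) : EReal) := by
  have key : c₃ * ‖v‖^2 ≤ ⟪v, Matrix.toEuclideanLin P v⟫ := sigma_ge c₃ P hP v
  set G := gradient f x with hG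
  set T := Matrix.toEuclideanLin A with hTdef
  set σ := (⟪v, Matrix.toEuclideanLin P v⟫ : ℝ) with hσdef
  have hreal : ∀ z : EuclideanSpace ℝ (Fin m), g z ≠ ⊤ → ∃ r : ℝ, g z = (r : EReal) :=
    fun z hz => ⟨(g z).toReal, (EReal.coe_toReal hz (hg_ne_bot z)).symm⟩
  obtain ⟨a, ha⟩ := hreal _ hgAx
  -- finiteness of g(Tx+Tv)
  have h0 := hv 0
  simp only [map_zero, add_zero, inner_zero_right, inner_zero_left, mul_zero, zero_add,
    EReal.coe_zero] at h0
  rw [ha] at h0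
  have hbne : g (T x + T v) ≠ ⊤ := by
    intro h; rw [h] at h0
    have : ((⟪G, v⟫ + 1 / 2 * σ : ℝ) : EReal) + ⊤ = ⊤ := EReal.add_top_of_ne_bot (EReal.coe_ne_bot _)
    rw [this, top_le_iff] at h0
    exact EReal.coe_ne_top a h0
  obtain ⟨b, hb⟩ := hreal _ hbne
  -- Delta bound for each t < 1
  have hΔt : ∀ t : ℝ, 0 ≤ t → t < 1 → ⟪G, v⟫ + b - a ≤ -(1 + t) / 2 * σ := by
    intro t ht ht1
    have h1 := hv (t • v)
    have hvec : t • (T x + T v) + (1 - t) • (T x) = T x + T (t • v) := by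
      rw [map_smul]; module
    have h2 := hg_convex (T x + T v) (T x) t ht ht1.le
    rw [hvec, ha, hb] at h2
    have h3 := le_trans h1 (add_le_add_right h2 _)
    rw [hb] at h3
    rw [real_inner_smul_right G v t, map_smul, real_inner_smul_left,
      real_inner_smul_right] at h3
    norm_cast at h3
    nlinarith [h3]
  -- sigma nonneg and Delta ≤ -sigma
  have hnv : (0:ℝ) ≤ ‖v‖^2 := sq_nonneg _
  have hσ0 : 0 ≤ σ := le_trans (by positivity) key
  have hΔ : ⟪G, v⟫ + b - a ≤ -σ := by
    by_contra hcon
    push_neg at hcon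
    have h0' := hΔt 0 le_rfl one_pos
    have hσpos : 0 < σ := by
      rcases hσ0.lt_or_eq with h | h
      · exact h
      · exfalso; rw [← h] at hcon h0'; linarith
    set ε := ⟪G, v⟫ + b - a + σ with hε
    have hεpos : 0 < ε := by simp only [hε]; linarith
    rcases lt_or_ge (σ/2) ε with hc | hc
    · linarith
    · have hd1 : ε / σ ≤ 1/2 := by rw [div_le_iff₀ hσpos]; linarith
      have hd0 : 0 < ε / σ := div_pos hεpos hσpos
      have ht := hΔt (1 - ε/σ) (by linarith) (by linarith)
      have heq : -(1 + (1 - ε/σ)) / 2 * σ = -σ + ε/2 := by field_simp; ring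
      rw [heq] at ht
      linarith
  have hΔc : ⟪G, v⟫ + b - a ≤ -(c₃ * ‖v‖^2) := le_trans hΔ (by linarith)
  -- finiteness of g(Tx + α₁•Tv), α₂, α₃ points
  have finmin : ∀ (w : EuclideanSpace ℝ (Fin m)) (c : ℝ),
      ((c : ℝ) : EReal) + g (T x + w) ≤ g (T x) → g (T x + w) ≠ ⊤ := by
    intro w c h hh
    rw [hh, ha] at h
    have : ((c : ℝ) : EReal) + ⊤ = ⊤ := EReal.add_top_of_ne_bot (EReal.coe_ne_bot _)
    rw [this, top_le_iff] at h
    exact EReal.coe_ne_top _ (by exact_mod_cast h)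
  have h10 := hα₁ 0
  simp only [mul_zero, zero_pow, ne_eq, OfNat.ofNat_ne_zero, not_false_eq_true, add_zero,
    zero_smul, EReal.coe_zero, zero_add] at h10
  obtain ⟨p, hp⟩ := hreal _ (finmin _ _ h10)
  have h20 := hα₂ 0
  simp only [mul_zero, zero_pow, ne_eq, OfNat.ofNat_ne_zero, not_false_eq_true, add_zero,
    zero_smul, EReal.coe_zero, zero_add] at h20
  obtain ⟨q, hq⟩ := hreal _ (finmin _ _ h20)
  have h30 := hα₃ 0
  simp only [mul_zero, zero_pow, ne_eq, OfNat.ofNat_ne_zero, not_false_eq_true, add_zero,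
    zero_smul, EReal.coe_zero, zero_add] at h30
  obtain ⟨r, hr⟩ := hreal _ (finmin _ _ h30)
  -- parametric bound for the first 1D subproblem
  have hm₁ : ∀ α : ℝ, 0 ≤ α → α ≤ 1 →
      ⟪G,v⟫*α₁ + qv/2*‖v‖^2*α₁^2 + p - a ≤ α*(⟪G,v⟫ + b - a) + qv/2*‖v‖^2*α^2 := by
    intro α ha0 ha1
    have h1 := hα₁ α
    have hvec : α • (T x + T v) + (1-α) • T x = T x + α • T v := by module
    have h2 := hg_convex (T x + T v) (T x) α ha0 ha1
    rw [hvec, ha, hb] at h2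
    have h3 := le_trans h1 (add_le_add_right h2 _)
    rw [hp] at h3
    norm_cast at h3
    linarith
  have hqvpos : 0 < qv := lt_of_lt_of_le hc₁ hqv₁
  have hqspos : 0 < qs := lt_of_lt_of_le hc₁ hqs
  have hc₂pos : 0 < c₂ := lt_of_lt_of_le hc₁ hc₁₂
  set β := min 1 (c₃/qv) with hβdef
  have hβ0 : 0 < β := lt_min one_pos (div_pos hc₃ hqvpos)
  have hβ1 : β ≤ 1 := min_le_left _ _
  have hβq : qv * β ≤ c₃ := by
    have h1 : β ≤ c₃/qv := min_le_right _ _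
    have h2 : qv * β ≤ qv * (c₃/qv) := mul_le_mul_of_nonneg_left h1 hqvpos.le
    calc qv * β ≤ qv * (c₃/qv) := h2
    _ = c₃ := by field_simp
  have hβm : min 1 (c₃/c₂) ≤ β := by
    refine min_le_min le_rfl ?_
    exact div_le_div_of_nonneg_left hc₃.le hqvpos hqv₂
  have hm1b : ⟪G,v⟫*α₁ + qv/2*‖v‖^2*α₁^2 + p - a ≤ -(c₃/2) * (min 1 (c₃/c₂)) * ‖v‖^2 := by
    have h1 := hm₁ β hβ0.le hβ1
    have h2 : β * (⟪G,v⟫ + b - a) ≤ β * (-(c₃ * ‖v‖^2)) := mul_le_mul_of_nonneg_left hΔc hβ0.le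
    have hint1 : 0 ≤ β*‖v‖^2*(c₃ - qv*β) :=
      mul_nonneg (mul_nonneg hβ0.le hnv) (by linarith)
    have hint2 : c₃/2*‖v‖^2*(min 1 (c₃/c₂)) ≤ c₃/2*‖v‖^2*β :=
      mul_le_mul_of_nonneg_left hβm (mul_nonneg (by linarith) hnv)
    nlinarith [h1, h2, hint1, hint2]
  -- second subproblem
  have hm₂ : ⟪G,s⟫*α₂ + qs/2*‖s‖^2*α₂^2 + q - a ≤ 0 := by
    have h1 := h20
    rw [hq, ha] at h1
    norm_cast at h1
    linarith
  -- combined direction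
  have hGd : ⟪G, dtilde⟫ = α₁*⟪G,v⟫ + α₂*⟪G,s⟫ := by
    rw [hdtilde, inner_add_right, real_inner_smul_right, real_inner_smul_right]
  have hqd' : qd = qv*α₁^2*‖v‖^2 + qs*α₂^2*‖s‖^2 := by
    rw [hqd, norm_smul, norm_smul]
    simp [mul_pow, sq_abs]
    ring
  have hqdnn : 0 ≤ qd := by
    rw [hqd']
    have h1 : (0:ℝ) ≤ ‖s‖^2 := sq_nonneg _
    nlinarith [sq_nonneg α₁, sq_nonneg α₂]
  have hm₃ : ⟪G,dtilde⟫*α₃ + qd/2*α₃^2 + r - a ≤ -(c₃ * min 1 (c₃/c₂) / 4) * ‖v‖^2 := by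
    have h1 := hα₃ (1/2)
    have hvec2 : (1/2 : ℝ) • (T x + α₁ • T v) + (1 - (1/2:ℝ)) • (T x + α₂ • T s)
        = T x + (1/2:ℝ) • T dtilde := by
      rw [hdtilde, map_add, map_smul, map_smul]; module
    have h2 := hg_convex (T x + α₁ • T v) (T x + α₂ • T s) (1/2) (by norm_num) (by norm_num)
    rw [hvec2, hp, hq] at h2
    have h3 := le_trans h1 (add_le_add_right h2 _)
    rw [hr] at h3
    norm_cast at h3
    rw [hGd, hqd'] at h3
    rw [hGd, hqd']
    linarith [hm1b, hm₂, h3]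
  -- conclusion
  have hTd : T d = α₃ • T dtilde := by rw [hd, map_smul]
  have hfin : ⟪G, d⟫ = α₃ * ⟪G, dtilde⟫ := by rw [hd, real_inner_smul_right]
  rw [hTd, hr, ha, hfin]
  have hcast : ((α₃ * ⟪G, dtilde⟫ : ℝ) : EReal) + (r : EReal) - (a : EReal)
      = ((α₃ * ⟪G, dtilde⟫ + r - a : ℝ) : EReal) := by
    norm_cast
  rw [hcast]
  rw [EReal.coe_le_coe_iff]
  nlinarith [hm₃, mul_nonneg hqdnn (sq_nonneg α₃)]
end

section
/- Let f : ℝ^n → ℝ be L-smooth (L > 0), let g : ℝ^m → ℝ ∪ {+∞} be proper and convex, let A ∈ ℝ^{m×n}, and set F(x) = f(x) + g(Ax). Let σ ∈ (0,1) and c₁ > 0. Suppose x, d ∈ ℝ^n with d ≠ 0, g(Ax) and g(Ax+Ad) finite, the sufficient decrease condition Δ := ∇f(x)ᵀd + g(Ax + Ad) − g(Ax) ≤ −(c₁/2)‖d‖² holds, and for some t ∈ (0, 1/2] the Armijo condition fails at stepsize 2t, i.e., F(x + 2t·d) − F(x) > 2σt·Δ. Then t > (1 − σ)c₁/(2L).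 -/
open scoped RealInnerProductSpace

lemma descent_aux {n : ℕ} (L : ℝ)
    (f : EuclideanSpace ℝ (Fin n) → ℝ)
    (hf : Differentiable ℝ f)
    (hlip : ∀ x y : EuclideanSpace ℝ (Fin n),
        ‖gradient f x - gradient f y‖ ≤ L * ‖x - y‖)
    (x d : EuclideanSpace ℝ (Fin n)) (τ : ℝ) (hτ : 0 ≤ τ) :
    f (x + τ • d) ≤ f x + τ * ⟪gradient f x, d⟫ + L / 2 * τ ^ 2 * ‖d‖ ^ 2 := by
  set h : ℝ → ℝ := fun s => f (x + s • d) - s * ⟪gradient f x, d⟫ - L / 2 * s ^ 2 * ‖d‖ ^ 2 with hh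
  have hline : ∀ s : ℝ, HasDerivAt (fun s : ℝ => x + s • d) d s := by
    intro s
    simpa using ((hasDerivAt_id s).smul_const d).const_add x
  have hφ : ∀ s : ℝ, HasDerivAt (fun s => f (x + s • d)) ⟪gradient f (x + s • d), d⟫ s := by
    intro s
    have h1 := ((hf (x + s • d)).hasGradientAt.hasFDerivAt).comp_hasDerivAt s (hline s)
    simpa [InnerProductSpace.toDual_apply_apply, Function.comp_def] using h1
  have hderiv : ∀ s : ℝ, HasDerivAt h
      (⟪gradient f (x + s • d), d⟫ - ⟪gradient f x, d⟫ - L * s * ‖d‖ ^ 2) s := by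
    intro s
    have h1 : HasDerivAt (fun u : ℝ => u * ⟪gradient f x, d⟫) ⟪gradient f x, d⟫ s := by
      simpa using (hasDerivAt_id s).mul_const (⟪gradient f x, d⟫ : ℝ)
    have h2 : HasDerivAt (fun u : ℝ => L / 2 * u ^ 2 * ‖d‖ ^ 2) (L * s * ‖d‖ ^ 2) s := by
      have := ((hasDerivAt_pow 2 s).const_mul (L / 2)).mul_const (‖d‖ ^ 2)
      convert this using 1
      push_cast
      norm_num
      exacts [rfl, rfl, by push_cast; ring]
    exact ((hφ s).sub h1).sub h2
  have hmono : AntitoneOn h (Set.Icc 0 τ) := by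
    apply antitoneOn_of_deriv_nonpos (convex_Icc 0 τ)
    · exact fun s hs => ((hderiv s).differentiableAt).continuousAt.continuousWithinAt
    · intro s hs
      exact (hderiv s).differentiableAt.differentiableWithinAt
    · intro s hs
      rw [interior_Icc] at hs
      rw [(hderiv s).deriv]
      have h1 : ⟪gradient f (x + s • d) - gradient f x, d⟫ ≤ L * s * ‖d‖ ^ 2 := by
        calc ⟪gradient f (x + s • d) - gradient f x, d⟫
            ≤ ‖gradient f (x + s • d) - gradient f x‖ * ‖d‖ := real_inner_le_norm _ _
          _ ≤ (L * ‖(x + s • d) - x‖) * ‖d‖ := by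
              apply mul_le_mul_of_nonneg_right (hlip _ _) (norm_nonneg d)
          _ = L * s * ‖d‖ ^ 2 := by
              simp [norm_smul, abs_of_pos hs.1]; ring
      have h2 : ⟪gradient f (x + s • d) - gradient f x, d⟫
          = ⟪gradient f (x + s • d), d⟫ - ⟪gradient f x, d⟫ := inner_sub_left _ _ _
      linarith [h1, h2.symm.le]
  have key := hmono (Set.left_mem_Icc.mpr hτ) (Set.right_mem_Icc.mpr hτ) hτ
  have h0 : h 0 = f x := by simp only [hh]; norm_num
  have hτ' : h τ = f (x + τ • d) - τ * ⟪gradient f x, d⟫ - L / 2 * τ ^ 2 * ‖d‖ ^ 2 := rfl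
  rw [h0, hτ'] at key
  linarith

/-- If `f` is `L`-smooth (`L > 0`), the sufficient decrease condition
`Δ ≤ −(c₁/2)‖d‖²` holds with `d ≠ 0`, and the Armijo condition fails at stepsize `2t` for some
`t ∈ (0, 1/2]`, i.e. `F(x + 2t·d) − F(x) > 2σt·Δ`, then `t > (1 − σ)c₁/(2L)`. -/
theorem stmt4 {n m : ℕ} (L : ℝ) (hL : 0 < L)
    (f : EuclideanSpace ℝ (Fin n) → ℝ)
    (hf : Differentiable ℝ f)
    (hlip : ∀ x y : EuclideanSpace ℝ (Fin n),
        ‖gradient f x - gradient f y‖ ≤ L * ‖x - y‖)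
    (g : EuclideanSpace ℝ (Fin m) → EReal)
    (hg_proper : ∃ z, g z ≠ ⊤)
    (hg_ne_bot : ∀ z, g z ≠ ⊥)
    (hg_convex : ∀ u w : EuclideanSpace ℝ (Fin m), ∀ t : ℝ, 0 ≤ t → t ≤ 1 →
        g (t • u + (1 - t) • w) ≤ (t : EReal) * g u + ((1 - t : ℝ) : EReal) * g w)
    (A : Matrix (Fin m) (Fin n) ℝ)
    (F : EuclideanSpace ℝ (Fin n) → EReal)
    (hF : ∀ z, F z = ((f z : ℝ) : EReal) + g (Matrix.toEuclideanLin A z))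
    (σ c₁ : ℝ) (hσ0 : 0 < σ) (hσ1 : σ < 1) (hc₁ : 0 < c₁)
    (x d : EuclideanSpace ℝ (Fin n)) (hd : d ≠ 0)
    (hgx : g (Matrix.toEuclideanLin A x) ≠ ⊤)
    (hgxd : g (Matrix.toEuclideanLin A x + Matrix.toEuclideanLin A d) ≠ ⊤)
    (Δ : EReal)
    (hΔ : Δ = ((⟪gradient f x, d⟫ : ℝ) : EReal)
        + g (Matrix.toEuclideanLin A x + Matrix.toEuclideanLin A d)
        - g (Matrix.toEuclideanLin A x))
    (hdec : Δ ≤ ((-(c₁ / 2) * ‖d‖ ^ 2 : ℝ) : EReal))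
    (t : ℝ) (ht0 : 0 < t) (ht1 : t ≤ 1 / 2)
    (harmijo_fail : F (x + (2 * t) • d) - F x > ((2 * σ * t : ℝ) : EReal) * Δ) :
    t > (1 - σ) * c₁ / (2 * L) := by
  set Ax := Matrix.toEuclideanLin A x with hAx
  set Ad := Matrix.toEuclideanLin A d with hAd
  set a : ℝ := (g Ax).toReal with ha'
  set b : ℝ := (g (Ax + Ad)).toReal with hb'
  have ha : g Ax = (a : EReal) := (EReal.coe_toReal hgx (hg_ne_bot _)).symm
  have hb : g (Ax + Ad) = (b : EReal) := (EReal.coe_toReal hgxd (hg_ne_bot _)).symm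
  set Δr : ℝ := ⟪gradient f x, d⟫ + b - a with hΔr
  have hΔ' : Δ = (Δr : EReal) := by
    rw [hΔ, ha, hb, hΔr]
    norm_cast
  -- sufficient decrease, in ℝ
  have hdecr : Δr ≤ -(c₁ / 2) * ‖d‖ ^ 2 := by
    rw [hΔ'] at hdec; exact_mod_cast hdec
  -- A(x + 2t d) = Ax + (2t) Ad
  have hAz : Matrix.toEuclideanLin A (x + (2 * t) • d) = Ax + (2 * t) • Ad := by
    rw [map_add, map_smul, hAx, hAd]
  -- convexity bound
  have hcomb : (2 * t) • (Ax + Ad) + (1 - 2 * t) • Ax = Ax + (2 * t) • Ad := by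
    module
  have hconv := hg_convex (Ax + Ad) Ax (2 * t) (by linarith) (by linarith)
  rw [hcomb, ha, hb] at hconv
  have hconv' : g (Ax + (2 * t) • Ad) ≤ ((2 * t * b + (1 - 2 * t) * a : ℝ) : EReal) := by
    refine hconv.trans_eq ?_
    norm_cast
  have hne_top : g (Ax + (2 * t) • Ad) ≠ ⊤ :=
    (lt_of_le_of_lt hconv' (EReal.coe_lt_top _)).ne
  set c : ℝ := (g (Ax + (2 * t) • Ad)).toReal with hc'
  have hc : g (Ax + (2 * t) • Ad) = (c : EReal) :=
    (EReal.coe_toReal hne_top (hg_ne_bot _)).symm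
  have hcr : c ≤ 2 * t * b + (1 - 2 * t) * a := by
    rw [hc] at hconv'; exact_mod_cast hconv'
  -- Armijo failure in ℝ
  have harm : 2 * σ * t * Δr < f (x + (2 * t) • d) + c - (f x + a) := by
    rw [hF, hF, hAz, hc, ha, hΔ'] at harmijo_fail
    have : ((2 * σ * t * Δr : ℝ) : EReal) < (((f (x + (2 * t) • d) + c) - (f x + a) : ℝ) : EReal) := by
      refine lt_of_eq_of_lt ?_ (lt_of_lt_of_eq harmijo_fail ?_)
      · norm_cast
      · norm_cast
    exact_mod_cast this
  -- descent lemma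
  have hdesc := descent_aux L f hf hlip x d (2 * t) (by linarith)
  -- norm positivity
  have hd2 : 0 < ‖d‖ ^ 2 := pow_pos (norm_pos_iff.mpr hd) 2
  have hprod : 2 * t * Δr = 2 * t * ⟪gradient f x, d⟫ + 2 * t * b - 2 * t * a := by
    rw [hΔr]; ring
  have e1 : 2 * σ * t * Δr < 2 * t * Δr + 2 * L * t ^ 2 * ‖d‖ ^ 2 := by
    linarith [harm, hdesc, hcr, hprod]
  have e1' : (2 * t) * ((σ - 1) * Δr) < (2 * t) * (L * t * ‖d‖ ^ 2) := by linarith [e1]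
  have e2 : (σ - 1) * Δr < L * t * ‖d‖ ^ 2 :=
    lt_of_mul_lt_mul_left e1' (by linarith : (0:ℝ) ≤ 2 * t)
  have e3 : (σ - 1) * (-(c₁ / 2) * ‖d‖ ^ 2) ≤ (σ - 1) * Δr :=
    mul_le_mul_of_nonpos_left hdecr (by linarith : σ - 1 ≤ 0)
  have e5 : (1 - σ) * (c₁ / 2) < L * t :=
    lt_of_mul_lt_mul_right (by nlinarith [e2, e3] :
      ((1 - σ) * (c₁ / 2)) * ‖d‖ ^ 2 < (L * t) * ‖d‖ ^ 2) (le_of_lt hd2)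
  rw [gt_iff_lt, div_lt_iff₀ (by linarith : (0:ℝ) < 2 * L)]
  linarith
end

section
/- Let F : ℝ^n → ℝ ∪ {+∞} be lower semicontinuous, and let x⁰ ∈ ℝ^n be such that the level set L_F(x⁰) = {x : F(x) ≤ F(x⁰)} is nonempty and compact. Let {x^k} ⊂ ℝ^n and {v_k} ⊂ ℝ^n be sequences and let σ > 0, c > 0, t_min > 0 and stepsizes t_k ≥ t_min be such that for every k, F(x^{k+1}) − F(x^k) ≤ −σ·c·t_k·‖v_k‖². Then: (i) x^k ∈ L_F(x⁰) for all k and {x^k} has at least one accumulation point, and (ii) v_k → 0 as k → ∞. -/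
open Filter

/-- If `F` is lower semicontinuous with nonempty compact level set
`L_F(x⁰) = {x : F x ≤ F x⁰}` (with `F x⁰` finite), and the sequences `{x^k}`, `{v_k}` with
stepsizes `t_k ≥ t_min > 0` satisfy `F(x^{k+1}) − F(x^k) ≤ −σ·c·t_k·‖v_k‖²`, then every iterate
stays in the level set, the sequence `{x^k}` has an accumulation point, and `v_k → 0`. -/
theorem stmt5 {n : ℕ}
    (F : EuclideanSpace ℝ (Fin n) → EReal)
    (hF_lsc : LowerSemicontinuous F)
    (hF_ne_bot : ∀ z, F z ≠ ⊥)
    (x v : ℕ → EuclideanSpace ℝ (Fin n))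
    (hx0_fin : F (x 0) ≠ ⊤)
    (hlev_ne : ({y | F y ≤ F (x 0)} : Set (EuclideanSpace ℝ (Fin n))).Nonempty)
    (hlev_cpt : IsCompact ({y | F y ≤ F (x 0)} : Set (EuclideanSpace ℝ (Fin n))))
    (σ c tmin : ℝ) (hσ : 0 < σ) (hc : 0 < c) (htmin : 0 < tmin)
    (t : ℕ → ℝ) (ht : ∀ k, tmin ≤ t k)
    (hdec : ∀ k, F (x (k + 1)) - F (x k)
        ≤ ((-(σ * c * t k * ‖v k‖ ^ 2) : ℝ) : EReal)) :
    (∀ k, F (x k) ≤ F (x 0)) ∧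
    (∃ a : EuclideanSpace ℝ (Fin n), ∃ φ : ℕ → ℕ, StrictMono φ ∧
        Tendsto (x ∘ φ) atTop (nhds a)) ∧
    Tendsto v atTop (nhds 0) := by
  -- nonnegativity of the decrease quantity
  have hr_nonneg : ∀ k, 0 ≤ σ * c * t k * ‖v k‖ ^ 2 := fun k =>
    mul_nonneg (mul_nonneg (mul_nonneg hσ.le hc.le) (htmin.le.trans (ht k)))
      (sq_nonneg _)
  -- every iterate stays in the level set
  have key : ∀ k, F (x k) ≤ F (x 0) := by
    intro k
    induction k with
    | zero => exact le_rfl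
    | succ k ih =>
      have hk_top : F (x k) ≠ ⊤ := fun h => hx0_fin (top_le_iff.1 (h ▸ ih))
      have hstep := (EReal.sub_le_iff_le_add (Or.inl (hF_ne_bot _))
        (Or.inl hk_top)).1 (hdec k)
      have hneg : ((-(σ * c * t k * ‖v k‖ ^ 2) : ℝ) : EReal) ≤ 0 := by
        exact_mod_cast neg_nonpos_of_nonneg (hr_nonneg k)
      calc F (x (k + 1)) ≤ ((-(σ * c * t k * ‖v k‖ ^ 2) : ℝ) : EReal) + F (x k) := hstep
        _ ≤ 0 + F (x k) := add_le_add_left hneg _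
        _ = F (x k) := zero_add _
        _ ≤ F (x 0) := ih
  have hmem : ∀ k, x k ∈ {y | F y ≤ F (x 0)} := key
  have haccum := hlev_cpt.tendsto_subseq hmem
  refine ⟨key, ?_, ?_⟩
  · obtain ⟨a, _, φ, hφ, hconv⟩ := haccum
    exact ⟨a, φ, hφ, hconv⟩
  -- lower bound for F on the level set
  have hM : ∃ M : ℝ, ∀ z ∈ {y | F y ≤ F (x 0)}, ((M : ℝ) : EReal) ≤ F z := by
    have hopen : ∀ m : ℕ, IsOpen (F ⁻¹' Set.Ioi ((-(m : ℝ) : ℝ) : EReal)) := fun m =>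
      hF_lsc.isOpen_preimage _
    have hcover : {y | F y ≤ F (x 0)} ⊆
        ⋃ m : ℕ, F ⁻¹' Set.Ioi ((-(m : ℝ) : ℝ) : EReal) := by
      intro z _
      by_cases hzt : F z = ⊤
      · exact Set.mem_iUnion.2 ⟨0, by simp [hzt]⟩
      · obtain ⟨m, hm⟩ := exists_nat_gt (-(F z).toReal)
        refine Set.mem_iUnion.2 ⟨m, ?_⟩
        have : ((-(m : ℝ) : ℝ) : EReal) < (((F z).toReal : ℝ) : EReal) := by
          exact_mod_cast neg_lt_of_neg_lt hm
        simpa [EReal.coe_toReal hzt (hF_ne_bot z)] using this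
    obtain ⟨s, hs⟩ := hlev_cpt.elim_finite_subcover _ hopen hcover
    refine ⟨-(s.sup id : ℕ), fun z hz => ?_⟩
    obtain ⟨m, hms, hmz⟩ := Set.mem_iUnion₂.1 (hs hz)
    have h1 : (-(s.sup id : ℕ) : ℝ) ≤ -(m : ℝ) := by
      have := Finset.le_sup (f := id) hms
      exact neg_le_neg (by exact_mod_cast this)
    exact le_trans (by exact_mod_cast h1) (le_of_lt hmz)
  obtain ⟨M, hMle⟩ := hM
  -- the real-valued sequence of function values
  set f : ℕ → ℝ := fun k => (F (x k)).toReal with hf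
  have hk_top : ∀ k, F (x k) ≠ ⊤ := fun k h => hx0_fin (top_le_iff.1 (h ▸ key k))
  have hco : ∀ k, (((f k : ℝ)) : EReal) = F (x k) := fun k =>
    EReal.coe_toReal (hk_top k) (hF_ne_bot _)
  have hstep' : ∀ k, f (k + 1) ≤ f k - σ * c * t k * ‖v k‖ ^ 2 := by
    intro k
    have hstep := (EReal.sub_le_iff_le_add (Or.inl (hF_ne_bot _))
      (Or.inl (hk_top k))).1 (hdec k)
    rw [← hco k, ← EReal.coe_add, ← hco (k + 1)] at hstep
    have h4 := EReal.coe_le_coe_iff.1 hstep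
    linarith
  have hlb : ∀ k, M ≤ f k := by
    intro k
    have := hMle (x k) (hmem k)
    rw [← hco k] at this
    exact_mod_cast this
  have hanti : Antitone f := by
    refine antitone_nat_of_succ_le fun k => ?_
    have := hstep' k
    nlinarith [hr_nonneg k]
  have hbdd : BddBelow (Set.range f) := ⟨M, fun y ⟨k, hk⟩ => hk ▸ hlb k⟩
  have hconv : Tendsto f atTop (nhds (⨅ k, f k)) := tendsto_atTop_ciInf hanti hbdd
  have hconv' : Tendsto (fun k => f (k + 1)) atTop (nhds (⨅ k, f k)) :=
    hconv.comp (tendsto_add_atTop_nat 1)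
  have hd : Tendsto (fun k => f k - f (k + 1)) atTop (nhds 0) := by
    simpa using hconv.sub hconv'
  -- squeeze
  have hsq : Tendsto (fun k => ‖v k‖ ^ 2) atTop (nhds 0) := by
    have hpos : 0 < σ * c * tmin := mul_pos (mul_pos hσ hc) htmin
    have hub : ∀ k, ‖v k‖ ^ 2 ≤ (f k - f (k + 1)) / (σ * c * tmin) := by
      intro k
      rw [le_div_iff₀ hpos]
      have h1 : σ * c * tmin * ‖v k‖ ^ 2 ≤ σ * c * t k * ‖v k‖ ^ 2 := by
        have h2 : tmin * ‖v k‖ ^ 2 ≤ t k * ‖v k‖ ^ 2 :=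
          mul_le_mul_of_nonneg_right (ht k) (sq_nonneg _)
        have h3 := mul_le_mul_of_nonneg_left h2 (mul_pos hσ hc).le
        nlinarith [h3]
      nlinarith [hstep' k]
    have hdiv : Tendsto (fun k => (f k - f (k + 1)) / (σ * c * tmin)) atTop (nhds 0) := by
      simpa using hd.div_const (σ * c * tmin)
    exact squeeze_zero (fun k => sq_nonneg _) hub hdiv
  have hnorm : Tendsto (fun k => ‖v k‖) atTop (nhds 0) := by
    have h0 : Tendsto ((fun y : ℝ => Real.sqrt y) ∘ fun k => ‖v k‖ ^ 2) atTop (nhds 0) := by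
      simpa using (Real.continuous_sqrt.tendsto 0).comp hsq
    have heq : (fun k => ‖v k‖) = (fun y : ℝ => Real.sqrt y) ∘ fun k => ‖v k‖ ^ 2 :=
      funext fun k => (Real.sqrt_sq (norm_nonneg _)).symm
    rw [heq]; exact h0
  exact tendsto_zero_iff_norm_tendsto_zero.2 hnorm
end

section
/- Let m < n, let U ∈ ℝ^{m×m} and V ∈ ℝ^{n×n} be orthogonal matrices, let Σ ∈ ℝ^{m×m} be an invertible diagonal matrix, and let A = U[Σ, 0_{m×(n−m)}]Vᵀ ∈ ℝ^{m×n}. Let P̃ ∈ ℝ^{(n−m)×(n−m)} be symmetric positive definite and define P = AᵀA + V·blockdiag(0_{m×m}, P̃)·Vᵀ ∈ ℝ^{n×n}. Then P is symmetric positive definite and A P⁻¹ Aᵀ = I_m. -/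
open Matrix

lemma aux_posDef_fromBlocks {m n : Type*} [Fintype m] [Fintype n] [DecidableEq m] [DecidableEq n]
    {A : Matrix m m ℝ} {D : Matrix n n ℝ} (hA : A.PosDef) (hD : D.PosDef) :
    (Matrix.fromBlocks A 0 0 D).PosDef := by
  rw [posDef_iff_dotProduct_mulVec]
  constructor
  · unfold Matrix.IsHermitian
    rw [fromBlocks_conjTranspose, hA.1.eq, hD.1.eq]
    simp
  · intro x hx
    have hsplit : star x ⬝ᵥ (Matrix.fromBlocks A 0 0 D *ᵥ x)
        = star (x ∘ Sum.inl) ⬝ᵥ (A *ᵥ (x ∘ Sum.inl)) + star (x ∘ Sum.inr) ⬝ᵥ (D *ᵥ (x ∘ Sum.inr)) := by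
      rw [fromBlocks_mulVec, dotProduct_block]
      simp [Function.comp_def]
    rw [hsplit]
    have h1 : x ∘ Sum.inl ≠ 0 ∨ x ∘ Sum.inr ≠ 0 := by
      by_contra h
      push_neg at h
      apply hx
      funext i
      cases i with
      | inl i => exact congrFun h.1 i
      | inr i => exact congrFun h.2 i
    rcases h1 with h | h
    · exact add_pos_of_pos_of_nonneg (hA.dotProduct_mulVec_pos h) (hD.posSemidef.dotProduct_mulVec_nonneg _)
    · exact add_pos_of_nonneg_of_pos (hA.posSemidef.dotProduct_mulVec_nonneg _) (hD.dotProduct_mulVec_pos h)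

lemma aux_posDef_conj {n : Type*} [Fintype n] [DecidableEq n]
    {M B : Matrix n n ℝ} (hM : M.PosDef) (hB : IsUnit B.det) :
    (B * M * Bᵀ).PosDef := by
  rw [posDef_iff_dotProduct_mulVec]
  constructor
  · have h := isHermitian_mul_mul_conjTranspose B hM.1
    simpa using h
  · intro x hx
    have key : star x ⬝ᵥ ((B * M * Bᵀ) *ᵥ x) = star (Bᵀ *ᵥ x) ⬝ᵥ (M *ᵥ (Bᵀ *ᵥ x)) := by
      rw [star_trivial, star_trivial, ← mulVec_mulVec, ← mulVec_mulVec, dotProduct_mulVec,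
        ← mulVec_transpose]
    rw [key]
    apply hM.dotProduct_mulVec_pos
    have hinj : Function.Injective (Bᵀ.mulVec) := by
      apply Matrix.mulVec_injective_iff_isUnit.2
      exact (Matrix.isUnit_iff_isUnit_det _).2 (by rwa [Matrix.det_transpose])
    intro h
    exact hx (hinj (a₁ := x) (a₂ := 0) (by simpa using h))

/-- For a full-row-rank matrix `A = U[Σ, 0]Vᵀ` (SVD, `m < n`, here the column
index type `Fin m ⊕ Fin p` with `p = n − m > 0` realizes `ℝⁿ`), and
`P = AᵀA + V·blockdiag(0, P̃)·Vᵀ` with `P̃` symmetric positive definite, the matrix `P` is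
symmetric positive definite and `A P⁻¹ Aᵀ = I_m`. -/
theorem stmt8 {m p : ℕ} (hp : 0 < p)
    (U : Matrix (Fin m) (Fin m) ℝ) (hU : Uᵀ * U = 1)
    (V : Matrix (Fin m ⊕ Fin p) (Fin m ⊕ Fin p) ℝ) (hV : Vᵀ * V = 1)
    (S : Matrix (Fin m) (Fin m) ℝ) (hSdiag : S.IsDiag) (hSinv : IsUnit S.det)
    (A : Matrix (Fin m) (Fin m ⊕ Fin p) ℝ)
    (hA : A = U * Matrix.fromCols S 0 * Vᵀ)
    (Pt : Matrix (Fin p) (Fin p) ℝ) (hPt : Pt.PosDef)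
    (P : Matrix (Fin m ⊕ Fin p) (Fin m ⊕ Fin p) ℝ)
    (hP : P = Aᵀ * A + V * Matrix.fromBlocks 0 0 0 Pt * Vᵀ) :
    P.PosDef ∧ A * P⁻¹ * Aᵀ = 1 := by
  replace hA : A = @HMul.hMul _ _ _ Matrix.instHMulOfFintypeOfMulOfAddCommMonoid (U * Matrix.fromCols S 0) Vᵀ := hA
  have hVVt : V * Vᵀ = 1 := mul_eq_one_comm.mp hV
  have hUUt : U * Uᵀ = 1 := mul_eq_one_comm.mp hU
  have hVdet : IsUnit V.det := Matrix.isUnit_det_of_left_inverse hV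
  have hStS : (Sᵀ * S).PosDef := by
    have h := aux_posDef_conj (B := Sᵀ) (M := 1) Matrix.PosDef.one
      (by rwa [Matrix.det_transpose])
    simpa using h
  set D : Matrix (Fin m ⊕ Fin p) (Fin m ⊕ Fin p) ℝ := Matrix.fromBlocks (Sᵀ * S) 0 0 Pt with hD
  have hDpos : D.PosDef := aux_posDef_fromBlocks hStS hPt
  have hc1 : ∀ {k : Type} [Fintype k] (X : Matrix (Fin m ⊕ Fin p) k ℝ), Vᵀ * (V * X) = X := by
    intro k _ X
    rw [← Matrix.mul_assoc, hV, Matrix.one_mul]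
  have hAt : Aᵀ = V * (Matrix.fromRows Sᵀ (0 : Matrix (Fin p) (Fin m) ℝ) * Uᵀ) := by
    rw [hA]
    simp only [transpose_mul, transpose_transpose, transpose_fromCols, transpose_zero,
      Matrix.mul_assoc]
  have hAtA : Aᵀ * A = V * Matrix.fromBlocks (Sᵀ * S) 0 0 0 * Vᵀ := by
    rw [hAt, hA]
    simp only [Matrix.mul_assoc]
    rw [← Matrix.mul_assoc Uᵀ U, hU, Matrix.one_mul,
      ← Matrix.mul_assoc (Matrix.fromRows Sᵀ 0) (Matrix.fromCols S 0),
      fromRows_mul_fromCols]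
    simp [Matrix.mul_assoc]
  have hPD : P = V * D * Vᵀ := by
    rw [hP, hAtA, hD]
    rw [Matrix.mul_assoc, Matrix.mul_assoc, ← Matrix.mul_add, ← Matrix.add_mul,
      fromBlocks_add]
    simp only [add_zero, zero_add]
    rw [Matrix.mul_assoc]
  have hPpos : P.PosDef := hPD ▸ aux_posDef_conj hDpos hVdet
  refine ⟨hPpos, ?_⟩
  have hDdet : IsUnit D.det := hDpos.isUnit.map (MonoidHom.id _) |>.map detMonoidHom
  have hPtdet : IsUnit Pt.det := isUnit_iff_ne_zero.2 hPt.det_pos.ne'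
  have hStSdet : IsUnit (Sᵀ * S).det := isUnit_iff_ne_zero.2 hStS.det_pos.ne'
  have hDdet' : IsUnit D.det := isUnit_iff_ne_zero.2 hDpos.det_pos.ne'
  have hPinv : P⁻¹ = V * D⁻¹ * Vᵀ := by
    apply inv_eq_right_inv
    rw [hPD]
    simp only [Matrix.mul_assoc]
    rw [hc1, ← Matrix.mul_assoc D D⁻¹, Matrix.mul_nonsing_inv _ hDdet', Matrix.one_mul, hVVt]
  have hDinvEq : D⁻¹ = Matrix.fromBlocks (Sᵀ * S)⁻¹ 0 0 Pt⁻¹ := by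
    apply inv_eq_right_inv
    rw [hD, fromBlocks_multiply]
    simp [Matrix.mul_nonsing_inv _ hStSdet, Matrix.mul_nonsing_inv _ hPtdet, fromBlocks_one]
  have hmid : S * (Sᵀ * S)⁻¹ * Sᵀ = 1 := by
    rw [Matrix.mul_inv_rev, ← Matrix.mul_assoc,
      Matrix.mul_nonsing_inv _ hSinv, Matrix.one_mul,
      Matrix.nonsing_inv_mul _ (by rwa [Matrix.det_transpose])]
  rw [hPinv, hAt, hA]
  simp only [Matrix.mul_assoc]
  rw [hc1, hc1, hDinvEq,
    ← Matrix.mul_assoc (Matrix.fromCols S 0) (Matrix.fromBlocks (Sᵀ * S)⁻¹ 0 0 Pt⁻¹),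
    fromCols_mul_fromBlocks]
  simp only [Matrix.mul_zero, Matrix.zero_mul, add_zero, zero_add]
  rw [← Matrix.mul_assoc (Matrix.fromCols (S * (Sᵀ * S)⁻¹) 0) (Matrix.fromRows Sᵀ 0),
    fromCols_mul_fromRows]
  simp only [Matrix.zero_mul, add_zero]
  rw [hmid, Matrix.one_mul, hUUt]
end

section
/- Let m < n, let U ∈ ℝ^{m×m} and V ∈ ℝ^{n×n} be orthogonal matrices, let Σ ∈ ℝ^{m×m} be an invertible diagonal matrix, and let A = U[Σ, 0_{m×(n−m)}]Vᵀ ∈ ℝ^{m×n}. Let S ∈ ℝ^{(n−m)×(n−m)} be invertible and define M = [A; 0_{(n−m)×n}] + blockdiag(0_{m×m}, S)·Vᵀ ∈ ℝ^{n×n} (the first term stacks A on top of an (n−m)×n zero block). Let D = diag(d₁,…,d_n) with d_i > 0 for all i, and set P = MᵀDM. Then P is symmetric positive definite and A P⁻¹ Aᵀ = diag(d₁,…,d_m)⁻¹. -/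
open Matrix

/-- For a full-row-rank matrix `A = U[Σ, 0]Vᵀ` (SVD, `m < n`, here the column
index type `Fin m ⊕ Fin p` with `p = n − m > 0` realizes `ℝⁿ`), with
`M = [A; 0] + blockdiag(0, S)·Vᵀ` (`S` invertible), a positive diagonal matrix
`D = diag(d₁,…,d_n)` and `P = MᵀDM`, the matrix `P` is symmetric positive definite and
`A P⁻¹ Aᵀ = diag(d₁,…,d_m)⁻¹`. -/
theorem stmt9 {m p : ℕ} (hp : 0 < p)
    (U : Matrix (Fin m) (Fin m) ℝ) (hU : Uᵀ * U = 1)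
    (V : Matrix (Fin m ⊕ Fin p) (Fin m ⊕ Fin p) ℝ) (hV : Vᵀ * V = 1)
    (S : Matrix (Fin m) (Fin m) ℝ) (hSdiag : S.IsDiag) (hSinv : IsUnit S.det)
    (A : Matrix (Fin m) (Fin m ⊕ Fin p) ℝ)
    (hA : A = U * Matrix.fromCols S 0 * Vᵀ)
    (T : Matrix (Fin p) (Fin p) ℝ) (hT : IsUnit T.det)
    (M : Matrix (Fin m ⊕ Fin p) (Fin m ⊕ Fin p) ℝ)
    (hM : M = Matrix.fromRows A 0 + Matrix.fromBlocks 0 0 0 T * Vᵀ)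
    (d : Fin m ⊕ Fin p → ℝ) (hd : ∀ i, 0 < d i)
    (P : Matrix (Fin m ⊕ Fin p) (Fin m ⊕ Fin p) ℝ)
    (hP : P = Mᵀ * Matrix.diagonal d * M) :
    P.PosDef ∧
    A * P⁻¹ * Aᵀ = (Matrix.diagonal fun i : Fin m => d (Sum.inl i))⁻¹ := by
  have hUU : U * Uᵀ = 1 := mul_eq_one_comm.mp hU
  have hVV : V * Vᵀ = 1 := mul_eq_one_comm.mp hV
  have hSS : S * S⁻¹ = 1 := mul_nonsing_inv S hSinv
  have hSS' : S⁻¹ * S = 1 := nonsing_inv_mul S hSinv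
  have hTT : T * T⁻¹ = 1 := mul_nonsing_inv T hT
  have hTT' : T⁻¹ * T = 1 := nonsing_inv_mul T hT
  have hSsymm : Sᵀ = S := hSdiag.isSymm
  set N : Matrix (Fin m ⊕ Fin p) (Fin m ⊕ Fin p) ℝ := fromBlocks (U * S) 0 0 T with hN
  set Ninv : Matrix (Fin m ⊕ Fin p) (Fin m ⊕ Fin p) ℝ := fromBlocks (S⁻¹ * Uᵀ) 0 0 T⁻¹
    with hNinv
  have hA' : Matrix.fromRows A (0 : Matrix (Fin p) (Fin m ⊕ Fin p) ℝ)
      = fromBlocks (U * S) 0 0 0 * Vᵀ := by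
    rw [hA, Matrix.mul_fromCols, Matrix.mul_zero,
      ← Matrix.fromRows_fromCols_eq_fromBlocks, Matrix.fromRows_mul,
      Matrix.fromCols_zero, Matrix.zero_mul]
    rfl
  have hMN : M = N * Vᵀ := by
    rw [hM, hA', hN, ← Matrix.add_mul, Matrix.fromBlocks_add]
    simp
  have h1 : U * S * (S⁻¹ * Uᵀ) = 1 := by
    rw [Matrix.mul_assoc, ← Matrix.mul_assoc S, hSS, Matrix.one_mul, hUU]
  have h2 : S⁻¹ * Uᵀ * (U * S) = 1 := by
    rw [Matrix.mul_assoc, ← Matrix.mul_assoc Uᵀ, hU, Matrix.one_mul, hSS']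
  have hN1 : N * Ninv = 1 := by
    rw [hN, hNinv, Matrix.fromBlocks_multiply]
    simp only [Matrix.mul_zero, Matrix.zero_mul, add_zero, zero_add, h1, hTT]
    exact Matrix.fromBlocks_one
  have hN2 : Ninv * N = 1 := by
    rw [hN, hNinv, Matrix.fromBlocks_multiply]
    simp only [Matrix.mul_zero, Matrix.zero_mul, add_zero, zero_add, h2, hTT']
    exact Matrix.fromBlocks_one
  have hMinv1 : M * (V * Ninv) = 1 := by
    rw [hMN, Matrix.mul_assoc, ← Matrix.mul_assoc Vᵀ, hV, Matrix.one_mul, hN1]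
  have hMunit : IsUnit M := by
    have : Invertible M := ⟨V * Ninv, mul_eq_one_comm.mp hMinv1, hMinv1⟩
    exact isUnit_of_invertible M
  set Dinv : Matrix (Fin m ⊕ Fin p) (Fin m ⊕ Fin p) ℝ := diagonal (fun i => (d i)⁻¹)
    with hDinv
  have hDD : diagonal d * Dinv = 1 := by
    rw [hDinv, diagonal_mul_diagonal]
    rw [show (fun i => d i * (d i)⁻¹) = fun _ => (1 : ℝ) from
      funext fun i => mul_inv_cancel₀ (hd i).ne', diagonal_one]
  -- Positive definiteness
  have hPD : P.PosDef := by
    rw [Matrix.posDef_iff_dotProduct_mulVec]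
    constructor
    · show Pᴴ = P
      have hherm : Pᴴ = Pᵀ := by
        ext i j
        simp [Matrix.conjTranspose_apply]
      rw [hherm, hP, Matrix.transpose_mul, Matrix.transpose_mul,
        Matrix.transpose_transpose, Matrix.diagonal_transpose, Matrix.mul_assoc]
    · intro x hx
      have hMx : M *ᵥ x ≠ 0 := by
        intro h
        exact hx (by
          have := Matrix.mulVec_injective_iff_isUnit.mpr hMunit
          have h0 : M *ᵥ x = M *ᵥ 0 := by simpa using h
          exact this h0)
      have key := (Matrix.PosDef.diagonal hd).dotProduct_mulVec_pos hMx
      rw [hP]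
      simp only [star_trivial] at key ⊢
      rw [← Matrix.mulVec_mulVec, ← Matrix.mulVec_mulVec, Matrix.dotProduct_mulVec,
        Matrix.vecMul_transpose]
      exact key
  refine ⟨hPD, ?_⟩
  -- Compute P⁻¹
  set Q : Matrix (Fin m ⊕ Fin p) (Fin m ⊕ Fin p) ℝ := V * (Ninv * (Dinv * (Ninvᵀ * Vᵀ)))
    with hQ
  have hPinv : P⁻¹ = Q := by
    apply inv_eq_right_inv
    rw [hP, hMN, hQ, Matrix.transpose_mul, Matrix.transpose_transpose]
    calc V * Nᵀ * diagonal d * (N * Vᵀ) * (V * (Ninv * (Dinv * (Ninvᵀ * Vᵀ))))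
        = V * (Nᵀ * (diagonal d * (N * (Vᵀ * V * (Ninv * (Dinv * (Ninvᵀ * Vᵀ))))))) := by
          simp only [Matrix.mul_assoc]
      _ = V * (Nᵀ * (diagonal d * ((N * Ninv) * (Dinv * (Ninvᵀ * Vᵀ))))) := by
          rw [hV, Matrix.one_mul, Matrix.mul_assoc]
      _ = V * (Nᵀ * ((diagonal d * Dinv) * (Ninvᵀ * Vᵀ))) := by
          rw [hN1, Matrix.one_mul, Matrix.mul_assoc]
      _ = V * ((Nᵀ * Ninvᵀ) * Vᵀ) := by rw [hDD, Matrix.one_mul, Matrix.mul_assoc]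
      _ = 1 := by
          rw [← Matrix.transpose_mul, hN2, Matrix.transpose_one, Matrix.one_mul, hVV]
  rw [hPinv, hQ, hA]
  -- A * Q * Aᵀ computation
  have hAt : (U * fromCols S 0 * Vᵀ)ᵀ = V * (fromRows S 0 * Uᵀ) := by
    rw [show U * fromCols S 0 * Vᵀ = U * fromCols S (0 : Matrix (Fin m) (Fin p) ℝ) * Vᵀ from rfl]
    rw [Matrix.transpose_mul, Matrix.transpose_mul, Matrix.transpose_transpose,
      Matrix.transpose_fromCols, hSsymm, Matrix.transpose_zero]
    rfl
  rw [hAt]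
  set C : Matrix (Fin m) (Fin m ⊕ Fin p) ℝ := fromCols S 0 with hC
  set R : Matrix (Fin m ⊕ Fin p) (Fin m) ℝ := fromRows S 0 with hR
  have hSts : (S⁻¹)ᵀ = S⁻¹ := by rw [Matrix.transpose_nonsing_inv, hSsymm]
  have key : C * (Ninv * (Dinv * (Ninvᵀ * R))) =
      Uᵀ * (diagonal fun i : Fin m => (d (Sum.inl i))⁻¹) * U := by
    have h1 : C * Ninv = fromCols Uᵀ 0 := by
      rw [hC, hNinv, Matrix.fromCols_mul_fromBlocks]
      rw [← Matrix.mul_assoc, hSS]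
      simp
    have hd' : Dinv = fromBlocks (diagonal fun i : Fin m => (d (Sum.inl i))⁻¹) 0 0
        (diagonal fun j : Fin p => (d (Sum.inr j))⁻¹) := by
      rw [hDinv, Matrix.fromBlocks_diagonal]
      congr 1
      funext i
      cases i <;> rfl
    have h2 : Ninvᵀ * R = fromRows U 0 := by
      rw [hR, hNinv, Matrix.fromBlocks_transpose, Matrix.fromBlocks_mul_fromRows]
      rw [show (S⁻¹ * Uᵀ)ᵀ * S = U by
        rw [Matrix.transpose_mul, Matrix.transpose_transpose, Matrix.mul_assoc, hSts,
          hSS', Matrix.mul_one]]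
      simp
    rw [← Matrix.mul_assoc, ← Matrix.mul_assoc, h1, hd',
      Matrix.fromCols_mul_fromBlocks]
    simp only [Matrix.mul_zero, Matrix.zero_mul, add_zero, zero_add]
    rw [Matrix.mul_assoc, h2, Matrix.fromCols_mul_fromRows]
    simp [Matrix.mul_assoc]
  calc U * C * Vᵀ * (V * (Ninv * (Dinv * (Ninvᵀ * Vᵀ)))) * (V * (R * Uᵀ))
      = U * (C * ((Vᵀ * V) * (Ninv * (Dinv * (Ninvᵀ * ((Vᵀ * V) *
          (R * Uᵀ))))))) := by simp only [Matrix.mul_assoc]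
    _ = U * (C * (Ninv * (Dinv * (Ninvᵀ * R)))) * Uᵀ := by
          rw [hV, Matrix.one_mul, Matrix.one_mul]
          simp only [Matrix.mul_assoc]
    _ = U * (Uᵀ * (diagonal fun i : Fin m => (d (Sum.inl i))⁻¹) * U) * Uᵀ := by rw [key]
    _ = (diagonal fun i : Fin m => (d (Sum.inl i))⁻¹) := by
          calc U * (Uᵀ * (diagonal fun i : Fin m => (d (Sum.inl i))⁻¹) * U) * Uᵀ
              = (U * Uᵀ) * (diagonal fun i : Fin m => (d (Sum.inl i))⁻¹) * (U * Uᵀ) := by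
                simp only [Matrix.mul_assoc]
            _ = _ := by rw [hUU, Matrix.one_mul, Matrix.mul_one]
    _ = (diagonal fun i : Fin m => d (Sum.inl i))⁻¹ := by
          symm
          apply inv_eq_right_inv
          rw [diagonal_mul_diagonal]
          rw [show (fun i : Fin m => d (Sum.inl i) * (d (Sum.inl i))⁻¹) = fun _ => (1:ℝ)
            from funext fun i => mul_inv_cancel₀ (hd _).ne', diagonal_one]
end

section
/- Let f : ℝ^n → ℝ be differentiable at x, let g : ℝ^m → ℝ ∪ {+∞} be proper, convex and lower semicontinuous, let A ∈ ℝ^{m×n}, and let P ∈ ℝ^{n×n} be symmetric positive definite. Define a = Ax − AP⁻¹∇f(x) and let g*(y) = sup_{z ∈ ℝ^m} (⟨z, y⟩ − g(z)) be the Fenchel conjugate of g. Suppose y* ∈ ℝ^m is a minimizer of the dual problem y ↦ (1/2)yᵀ(AP⁻¹Aᵀ)y + g*(y) − aᵀy over ℝ^m. Then x̃ = x − P⁻¹(∇f(x) + Aᵀy*) is a minimizer of the primal subproblem x' ↦ ∇f(x)ᵀ(x' − x) + g(Ax') + (1/2)(x'−x)ᵀP(x'−x) over ℝ^n. -/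
open Matrix
open scoped RealInnerProductSpace

lemma toEL_mul {k l p : ℕ} (M : Matrix (Fin k) (Fin l) ℝ) (N : Matrix (Fin l) (Fin p) ℝ)
    (v : EuclideanSpace ℝ (Fin p)) :
    Matrix.toEuclideanLin (M * N) v = Matrix.toEuclideanLin M (Matrix.toEuclideanLin N v) := by
  simp [Matrix.toEuclideanLin_apply, Matrix.mulVec_mulVec]

lemma toEL_one {k : ℕ} (v : EuclideanSpace ℝ (Fin k)) :
    Matrix.toEuclideanLin (1 : Matrix (Fin k) (Fin k) ℝ) v = v := by
  simp [Matrix.toEuclideanLin_apply]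

lemma inner_toEL {k l : ℕ} (M : Matrix (Fin k) (Fin l) ℝ) (u : EuclideanSpace ℝ (Fin k))
    (v : EuclideanSpace ℝ (Fin l)) :
    ⟪u, Matrix.toEuclideanLin M v⟫ = ⟪Matrix.toEuclideanLin Mᵀ u, v⟫ := by
  have h : (Mᵀ : Matrix (Fin l) (Fin k) ℝ) = Mᴴ := by
    ext i j; simp [Matrix.conjTranspose_apply]
  rw [h, Matrix.toEuclideanLin_conjTranspose_eq_adjoint, LinearMap.adjoint_inner_left]

lemma posdef_inner_nonneg {k : ℕ} {P : Matrix (Fin k) (Fin k) ℝ} (hP : P.PosDef)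
    (v : EuclideanSpace ℝ (Fin k)) : 0 ≤ ⟪v, Matrix.toEuclideanLin P v⟫ := by
  have h := hP.posSemidef.re_dotProduct_nonneg ((WithLp.equiv 2 (Fin k → ℝ)) v)
  simpa [Matrix.toEuclideanLin_apply, PiLp.inner_apply, dotProduct, mul_comm] using h

lemma toEL_inv_cancel {k : ℕ} {P : Matrix (Fin k) (Fin k) ℝ} (hP : P.PosDef)
    (v : EuclideanSpace ℝ (Fin k)) :
    Matrix.toEuclideanLin P (Matrix.toEuclideanLin P⁻¹ v) = v := by
  rw [← toEL_mul, Matrix.mul_nonsing_inv _ hP.det_pos.ne'.isUnit, toEL_one]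

lemma Pinv_transpose {k : ℕ} {P : Matrix (Fin k) (Fin k) ℝ} (hP : P.PosDef) :
    (P⁻¹)ᵀ = P⁻¹ := by
  rw [Matrix.transpose_nonsing_inv]
  congr 1
  have := hP.isHermitian
  simpa [Matrix.IsHermitian, Matrix.conjTranspose_eq_transpose_of_trivial] using this

lemma sep_epigraph {m : ℕ} {g : EuclideanSpace ℝ (Fin m) → EReal}
    (hg_lsc : LowerSemicontinuous g)
    (hg_convex : ∀ u w : EuclideanSpace ℝ (Fin m), ∀ t : ℝ, 0 ≤ t → t ≤ 1 →
        g (t • u + (1 - t) • w) ≤ (t : EReal) * g u + ((1 - t : ℝ) : EReal) * g w)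
    {z0 : EuclideanSpace ℝ (Fin m)} {c0 : ℝ} (h0 : g z0 = (c0 : EReal))
    {z1 : EuclideanSpace ℝ (Fin m)} {r1 : ℝ} (h1 : ¬ g z1 ≤ (r1 : EReal)) :
    ∃ (ξ : EuclideanSpace ℝ (Fin m)) (s u : ℝ), s ≤ 0 ∧
      (∀ (z : EuclideanSpace ℝ (Fin m)) (r : ℝ), g z ≤ (r : EReal) → ⟪ξ, z⟫ + r * s < u) ∧
      u < ⟪ξ, z1⟫ + r1 * s := by
  classical
  set K : Set ((EuclideanSpace ℝ (Fin m)) × ℝ) := {p : (EuclideanSpace ℝ (Fin m)) × ℝ | g p.1 ≤ (p.2 : EReal)} with hK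
  have hKclosed : IsClosed K := by
    have h1 : IsClosed {p : (EuclideanSpace ℝ (Fin m)) × EReal | g p.1 ≤ p.2} := hg_lsc.isClosed_epigraph
    have h2 : Continuous (fun p : (EuclideanSpace ℝ (Fin m)) × ℝ => ((p.1, (p.2 : EReal)) : (EuclideanSpace ℝ (Fin m)) × EReal)) :=
      continuous_fst.prodMk (continuous_coe_real_ereal.comp continuous_snd)
    exact h1.preimage h2
  have hKconvex : Convex ℝ K := by
    rintro p hp q hq a b ha hb hab
    have hcv := hg_convex p.1 q.1 a ha (by linarith)
    rw [show (1 : ℝ) - a = b by linarith] at hcv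
    have hsmul : (a • p + b • q).1 = a • p.1 + b • q.1 := rfl
    have hsnd : (a • p + b • q).2 = a * p.2 + b * q.2 := rfl
    show g (a • p + b • q).1 ≤ (((a • p + b • q).2 : ℝ) : EReal)
    rw [hsmul, hsnd]
    refine hcv.trans ?_
    rw [EReal.coe_add, EReal.coe_mul, EReal.coe_mul]
    exact add_le_add (mul_le_mul_of_nonneg_left hp (EReal.coe_nonneg.2 ha))
      (mul_le_mul_of_nonneg_left hq (EReal.coe_nonneg.2 hb))
  have hmem : ((z1, r1) : (EuclideanSpace ℝ (Fin m)) × ℝ) ∉ K := h1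
  obtain ⟨f, u, hfK, hfu⟩ := geometric_hahn_banach_closed_point hKconvex hKclosed hmem
  set s : ℝ := f (0, 1) with hs
  set L : EuclideanSpace ℝ (Fin m) →L[ℝ] ℝ := f.comp (ContinuousLinearMap.inl ℝ (EuclideanSpace ℝ (Fin m)) ℝ) with hL
  set ξ : EuclideanSpace ℝ (Fin m) := (InnerProductSpace.toDual ℝ (EuclideanSpace ℝ (Fin m))).symm L with hξ
  have hdec : ∀ (z : EuclideanSpace ℝ (Fin m)) (r : ℝ), f (z, r) = ⟪ξ, z⟫ + r * s := by
    intro z r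
    have h1 : ((z, r) : (EuclideanSpace ℝ (Fin m)) × ℝ) = (z, 0) + r • ((0 : EuclideanSpace ℝ (Fin m)), (1 : ℝ)) := by
      simp [Prod.ext_iff]

    rw [h1, map_add, f.map_smul]
    have h2 : ⟪ξ, z⟫ = f (z, 0) := by
      rw [hξ, InnerProductSpace.toDual_symm_apply]
      rfl
    rw [h2]
    simp [hs, smul_eq_mul]
  have hKin : ∀ (z : EuclideanSpace ℝ (Fin m)) (r : ℝ), g z ≤ (r : EReal) → ⟪ξ, z⟫ + r * s < u := by
    intro z r hz
    have := hfK (z, r) hz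
    rwa [hdec] at this
  have hσ : s ≤ 0 := by
    by_contra hpos
    push_neg at hpos
    have hin : ∀ t : ℝ, 0 ≤ t → ⟪ξ, z0⟫ + (c0 + t) * s < u := by
      intro t ht
      exact hKin z0 (c0 + t) (by rw [h0]; exact_mod_cast (by linarith : c0 ≤ c0 + t))
    have h00 := hin 0 le_rfl
    have hR : 0 < u - ⟪ξ, z0⟫ - c0 * s := by nlinarith
    have := hin ((u - ⟪ξ, z0⟫ - c0 * s) / s) (le_of_lt (div_pos hR hpos))
    rw [add_mul, div_mul_cancel₀ _ (ne_of_gt hpos)] at this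
    linarith
  refine ⟨ξ, s, u, hσ, hKin, ?_⟩
  have := hfu
  rwa [hdec] at this

lemma div_step {p r s u : ℝ} (hs : s < 0) (h : p + r * s < u) :
    p * (-s)⁻¹ - r ≤ u * (-s)⁻¹ := by
  have hinv : (0:ℝ) < (-s)⁻¹ := inv_pos.mpr (neg_pos.mpr hs)
  have h2 := mul_lt_mul_of_pos_right h hinv
  have hkey : s * (-s)⁻¹ = -1 := by
    rw [inv_neg, mul_neg, mul_inv_cancel₀ (ne_of_lt hs)]
  have h3 : (p + r * s) * (-s)⁻¹ = p * (-s)⁻¹ - r := by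
    rw [add_mul, mul_assoc, hkey]
    ring
  linarith

lemma div_step' {p r s u : ℝ} (hs : s < 0) (h : u < p + r * s) :
    u * (-s)⁻¹ < p * (-s)⁻¹ - r := by
  have hinv : (0:ℝ) < (-s)⁻¹ := inv_pos.mpr (neg_pos.mpr hs)
  have h2 := mul_lt_mul_of_pos_right h hinv
  have hkey : s * (-s)⁻¹ = -1 := by
    rw [inv_neg, mul_neg, mul_inv_cancel₀ (ne_of_lt hs)]
  have h3 : (p + r * s) * (-s)⁻¹ = p * (-s)⁻¹ - r := by
    rw [add_mul, mul_assoc, hkey]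
    ring
  linarith

section conj

variable {m : ℕ} {g : EuclideanSpace ℝ (Fin m) → EReal}

lemma gcase (hg_ne_bot : ∀ z, g z ≠ ⊥) (z : EuclideanSpace ℝ (Fin m)) :
    g z = ⊤ ∨ ∃ r : ℝ, g z = (r : EReal) := by
  by_cases h : g z = ⊤
  · exact Or.inl h
  · exact Or.inr ⟨(g z).toReal, (EReal.coe_toReal h (hg_ne_bot z)).symm⟩

lemma gstar_le_of_bound (hg_ne_bot : ∀ z, g z ≠ ⊥)
    {gstar : EuclideanSpace ℝ (Fin m) → EReal}
    (hgstar : ∀ y, gstar y = ⨆ z : EuclideanSpace ℝ (Fin m), (((⟪z, y⟫ : ℝ) : EReal) - g z))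
    (yv : EuclideanSpace ℝ (Fin m)) (cv : ℝ)
    (h : ∀ (z : EuclideanSpace ℝ (Fin m)) (r : ℝ), g z = (r : EReal) → ⟪z, yv⟫ - r ≤ cv) :
    gstar yv ≤ (cv : EReal) := by
  rw [hgstar]
  refine iSup_le fun z => ?_
  rcases gcase hg_ne_bot z with h1 | ⟨r, h1⟩
  · rw [h1]
    simp
  · rw [h1, ← EReal.coe_sub]
    exact_mod_cast h z r h1

lemma gstar_proper (hg_ne_bot : ∀ z, g z ≠ ⊥)
    (hg_lsc : LowerSemicontinuous g)
    (hg_convex : ∀ u w : EuclideanSpace ℝ (Fin m), ∀ t : ℝ, 0 ≤ t → t ≤ 1 →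
        g (t • u + (1 - t) • w) ≤ (t : EReal) * g u + ((1 - t : ℝ) : EReal) * g w)
    {z0 : EuclideanSpace ℝ (Fin m)} {c0 : ℝ} (h0 : g z0 = (c0 : EReal))
    {gstar : EuclideanSpace ℝ (Fin m) → EReal}
    (hgstar : ∀ y, gstar y = ⨆ z : EuclideanSpace ℝ (Fin m), (((⟪z, y⟫ : ℝ) : EReal) - g z)) :
    ∃ (y : EuclideanSpace ℝ (Fin m)) (c : ℝ), gstar y ≤ (c : EReal) := by
  have h1 : ¬ g z0 ≤ ((c0 - 1 : ℝ) : EReal) := by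
    rw [h0]
    exact_mod_cast not_le.mpr (by linarith : c0 - 1 < c0)
  obtain ⟨ξ, s, u, hs0, hKin, hu⟩ := sep_epigraph hg_lsc hg_convex h0 h1
  have hsneg : s < 0 := by
    rcases lt_or_eq_of_le hs0 with h | h
    · exact h
    · exfalso
      have h2 := hKin z0 c0 (le_of_eq h0)
      rw [h] at h2 hu
      simp only [mul_zero, add_zero] at h2 hu
      linarith
  refine ⟨(-s)⁻¹ • ξ, u * (-s)⁻¹, gstar_le_of_bound hg_ne_bot hgstar _ _ fun z r hr => ?_⟩
  have h2 := hKin z r (le_of_eq hr)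
  have h3 : ⟪z, (-s)⁻¹ • ξ⟫ = ⟪ξ, z⟫ * (-s)⁻¹ := by
    rw [real_inner_smul_right, real_inner_comm, mul_comm]
  rw [h3]
  exact div_step hsneg h2

lemma fenchel_eq (hg_ne_bot : ∀ z, g z ≠ ⊥)
    (hg_lsc : LowerSemicontinuous g)
    (hg_convex : ∀ u w : EuclideanSpace ℝ (Fin m), ∀ t : ℝ, 0 ≤ t → t ≤ 1 →
        g (t • u + (1 - t) • w) ≤ (t : EReal) * g u + ((1 - t : ℝ) : EReal) * g w)
    {z0 : EuclideanSpace ℝ (Fin m)} {c0 : ℝ} (h0 : g z0 = (c0 : EReal))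
    {gstar : EuclideanSpace ℝ (Fin m) → EReal}
    (hgstar : ∀ y, gstar y = ⨆ z : EuclideanSpace ℝ (Fin m), (((⟪z, y⟫ : ℝ) : EReal) - g z))
    {zs ys : EuclideanSpace ℝ (Fin m)} {cs : ℝ} (hgs : gstar ys = (cs : EReal))
    (hsub : ∀ y, ((cs + ⟪zs, y⟫ - ⟪zs, ys⟫ : ℝ) : EReal) ≤ gstar y) :
    g zs ≤ ((⟪zs, ys⟫ - cs : ℝ) : EReal) := by
  by_contra h1
  obtain ⟨ξ, s, u, hs0, hKin, hu⟩ := sep_epigraph hg_lsc hg_convex h0 h1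
  -- basic Fenchel-Young real form
  have hFY : ∀ (z : EuclideanSpace ℝ (Fin m)) (r : ℝ), g z = (r : EReal) →
      ⟪z, ys⟫ - r ≤ cs := by
    intro z r hr
    have h2 : (((⟪z, ys⟫ : ℝ) : EReal) - g z) ≤ gstar ys := by
      rw [hgstar]
      exact le_iSup (fun z => (((⟪z, ys⟫ : ℝ) : EReal) - g z)) z
    rw [hr, hgs, ← EReal.coe_sub] at h2
    exact_mod_cast h2
  rcases lt_or_eq_of_le hs0 with hsneg | hszero
  · -- s < 0
    set ν : EuclideanSpace ℝ (Fin m) := (-s)⁻¹ • ξ with hν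
    have hb : gstar ν ≤ ((u * (-s)⁻¹ : ℝ) : EReal) := by
      refine gstar_le_of_bound hg_ne_bot hgstar _ _ fun z r hr => ?_
      have h2 := hKin z r (le_of_eq hr)
      have h3 : ⟪z, ν⟫ = ⟪ξ, z⟫ * (-s)⁻¹ := by
        rw [hν, real_inner_smul_right, real_inner_comm, mul_comm]
      rw [h3]
      exact div_step hsneg h2
    have h4 := (hsub ν).trans hb
    have h5 : cs + ⟪zs, ν⟫ - ⟪zs, ys⟫ ≤ u * (-s)⁻¹ := by exact_mod_cast h4
    have h6 : ⟪zs, ν⟫ = ⟪ξ, zs⟫ * (-s)⁻¹ := by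
      rw [hν, real_inner_smul_right, real_inner_comm, mul_comm]
    have h7 := div_step' hsneg hu
    rw [h6] at h5
    linarith
  · -- s = 0
    rw [hszero] at hKin hu
    simp only [mul_zero, add_zero] at hKin hu
    have hb : gstar (ys + ξ) ≤ ((cs + u : ℝ) : EReal) := by
      refine gstar_le_of_bound hg_ne_bot hgstar _ _ fun z r hr => ?_
      have h2 := hKin z r (le_of_eq hr)
      have h3 := hFY z r hr
      rw [inner_add_right]
      have h4 : ⟪z, ξ⟫ = ⟪ξ, z⟫ := real_inner_comm _ _
      linarith
    have h4 := (hsub (ys + ξ)).trans hb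
    have h5 : cs + ⟪zs, ys + ξ⟫ - ⟪zs, ys⟫ ≤ cs + u := by exact_mod_cast h4
    rw [inner_add_right] at h5
    have h6 : ⟪zs, ξ⟫ = ⟪ξ, zs⟫ := real_inner_comm _ _
    linarith

end conj
lemma limit_aux {cs cy slope κ : ℝ}
    (h : ∀ t : ℝ, 0 < t → t ≤ 1 → cs ≤ slope + t * κ + cy) : cs ≤ slope + cy := by
  by_contra hcon
  push_neg at hcon
  set C : ℝ := max κ 0 with hC
  have hC0 : 0 ≤ C := le_max_right _ _
  have hκC : κ ≤ C := le_max_left _ _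
  set δ : ℝ := cs - (slope + cy) with hδ
  have hδ0 : 0 < δ := by simp only [hδ]; linarith
  set t : ℝ := min 1 (δ / (C + 1)) with htdef
  have ht0 : 0 < t := lt_min one_pos (div_pos hδ0 (by linarith))
  have ht1 : t ≤ 1 := min_le_left _ _
  have h4 := h t ht0 ht1
  have h5 : t * κ ≤ t * C := mul_le_mul_of_nonneg_left hκC ht0.le
  have h6 : t * C ≤ δ / (C + 1) * C := mul_le_mul_of_nonneg_right (min_le_right _ _) hC0
  have h7 : δ / (C + 1) * C < δ := by
    rw [div_mul_eq_mul_div, div_lt_iff₀ (by linarith : (0:ℝ) < C + 1)]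
    nlinarith
  linarith
set_option maxHeartbeats 1600000 in
/-- If `y*` minimizes the dual problem
`y ↦ (1/2)yᵀ(AP⁻¹Aᵀ)y + g*(y) − aᵀy` with `a = Ax − AP⁻¹∇f(x)` and `g*` the Fenchel conjugate
of `g`, then `x̃ = x − P⁻¹(∇f(x) + Aᵀy*)` minimizes the primal subproblem
`x' ↦ ∇f(x)ᵀ(x' − x) + g(Ax') + (1/2)(x'−x)ᵀP(x'−x)`. -/
theorem stmt10 {n m : ℕ}
    (f : EuclideanSpace ℝ (Fin n) → ℝ) (x : EuclideanSpace ℝ (Fin n))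
    (hf : DifferentiableAt ℝ f x)
    (g : EuclideanSpace ℝ (Fin m) → EReal)
    (hg_proper : ∃ z, g z ≠ ⊤)
    (hg_ne_bot : ∀ z, g z ≠ ⊥)
    (hg_lsc : LowerSemicontinuous g)
    (hg_convex : ∀ u w : EuclideanSpace ℝ (Fin m), ∀ t : ℝ, 0 ≤ t → t ≤ 1 →
        g (t • u + (1 - t) • w) ≤ (t : EReal) * g u + ((1 - t : ℝ) : EReal) * g w)
    (A : Matrix (Fin m) (Fin n) ℝ)
    (P : Matrix (Fin n) (Fin n) ℝ) (hP : P.PosDef)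
    (a : EuclideanSpace ℝ (Fin m))
    (ha : a = Matrix.toEuclideanLin A x
        - Matrix.toEuclideanLin A (Matrix.toEuclideanLin P⁻¹ (gradient f x)))
    (gstar : EuclideanSpace ℝ (Fin m) → EReal)
    (hgstar : ∀ y, gstar y = ⨆ z : EuclideanSpace ℝ (Fin m),
        (((⟪z, y⟫ : ℝ) : EReal) - g z))
    (ystar : EuclideanSpace ℝ (Fin m))
    (hystar : ∀ y : EuclideanSpace ℝ (Fin m),
        (((1 / 2) * ⟪ystar, Matrix.toEuclideanLin (A * P⁻¹ * Aᵀ) ystar⟫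
            - ⟪a, ystar⟫ : ℝ) : EReal) + gstar ystar
          ≤ (((1 / 2) * ⟪y, Matrix.toEuclideanLin (A * P⁻¹ * Aᵀ) y⟫
            - ⟪a, y⟫ : ℝ) : EReal) + gstar y)
    (xtilde : EuclideanSpace ℝ (Fin n))
    (hxtilde : xtilde = x - Matrix.toEuclideanLin P⁻¹
        (gradient f x + Matrix.toEuclideanLin Aᵀ ystar)) :
    ∀ x' : EuclideanSpace ℝ (Fin n),
      ((⟪gradient f x, xtilde - x⟫
          + (1 / 2) * ⟪xtilde - x, Matrix.toEuclideanLin P (xtilde - x)⟫ : ℝ) : EReal)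
        + g (Matrix.toEuclideanLin A xtilde)
      ≤ ((⟪gradient f x, x' - x⟫
          + (1 / 2) * ⟪x' - x, Matrix.toEuclideanLin P (x' - x)⟫ : ℝ) : EReal)
        + g (Matrix.toEuclideanLin A x') := by
  intro x'
  classical
  have hPt : Pᵀ = P := by
    have := hP.isHermitian
    simpa [Matrix.IsHermitian, Matrix.conjTranspose_eq_transpose_of_trivial] using this
  have hLsym2 : ∀ u v : EuclideanSpace ℝ (Fin n),
      ⟪u, Matrix.toEuclideanLin P v⟫ = ⟪Matrix.toEuclideanLin P u, v⟫ := by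
    intro u v
    rw [inner_toEL, hPt]
  have hQsym : ∀ u v : EuclideanSpace ℝ (Fin n),
      ⟪u, Matrix.toEuclideanLin P⁻¹ v⟫ = ⟪Matrix.toEuclideanLin P⁻¹ u, v⟫ := by
    intro u v
    rw [inner_toEL, Pinv_transpose hP]
  have hM : ∀ v : EuclideanSpace ℝ (Fin m), Matrix.toEuclideanLin (A * P⁻¹ * Aᵀ) v
      = Matrix.toEuclideanLin A (Matrix.toEuclideanLin P⁻¹ (Matrix.toEuclideanLin Aᵀ v)) := by
    intro v
    rw [toEL_mul, toEL_mul]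
  have hMsym : ∀ u v : EuclideanSpace ℝ (Fin m),
      ⟪u, Matrix.toEuclideanLin (A * P⁻¹ * Aᵀ) v⟫
        = ⟪v, Matrix.toEuclideanLin (A * P⁻¹ * Aᵀ) u⟫ := by
    intro u v
    rw [hM v, hM u, inner_toEL A u, inner_toEL A v, hQsym]
    exact real_inner_comm _ _
  -- properness
  obtain ⟨z₀, hz₀⟩ := hg_proper
  have h0 : g z₀ = (((g z₀).toReal : ℝ) : EReal) := (EReal.coe_toReal hz₀ (hg_ne_bot z₀)).symm
  set c₀ : ℝ := (g z₀).toReal with hc₀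
  -- Fenchel-Young pointwise real form
  have hFYgen : ∀ (yy : EuclideanSpace ℝ (Fin m)) (cyy : ℝ), gstar yy = (cyy : EReal) →
      ∀ (z : EuclideanSpace ℝ (Fin m)) (r : ℝ), g z = (r : EReal) → ⟪z, yy⟫ - r ≤ cyy := by
    intro yy cyy hyy z r hr
    have h2 : (((⟪z, yy⟫ : ℝ) : EReal) - g z) ≤ gstar yy := by
      rw [hgstar]
      exact le_iSup (fun z => (((⟪z, yy⟫ : ℝ) : EReal) - g z)) z
    rw [hr, hyy, ← EReal.coe_sub] at h2
    exact_mod_cast h2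
  have hnbgen : ∀ y, gstar y ≠ ⊥ := by
    intro y hbot
    have h2 : (((⟪z₀, y⟫ : ℝ) : EReal) - g z₀) ≤ gstar y := by
      rw [hgstar]
      exact le_iSup (fun z => (((⟪z, y⟫ : ℝ) : EReal) - g z)) z₀
    rw [h0, ← EReal.coe_sub, hbot, le_bot_iff] at h2
    exact EReal.coe_ne_bot _ h2
  -- gstar ystar is finite
  obtain ⟨y₀, c₁, hy₀⟩ := gstar_proper hg_ne_bot hg_lsc hg_convex h0 hgstar
  have hnt : gstar ystar ≠ ⊤ := by
    intro htop
    have h1 := (hystar y₀).trans (add_le_add_right hy₀ _)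
    rw [htop, EReal.coe_add_top, ← EReal.coe_add] at h1
    exact EReal.coe_ne_top _ (top_le_iff.mp h1)
  have hgs : gstar ystar = (((gstar ystar).toReal : ℝ) : EReal) :=
    (EReal.coe_toReal hnt (hnbgen ystar)).symm
  set cs : ℝ := (gstar ystar).toReal with hcs
  -- subgradient inequality
  have hsub : ∀ y, ((cs + ⟪a - Matrix.toEuclideanLin (A * P⁻¹ * Aᵀ) ystar, y⟫
      - ⟪a - Matrix.toEuclideanLin (A * P⁻¹ * Aᵀ) ystar, ystar⟫ : ℝ) : EReal) ≤ gstar y := by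
    intro y
    by_cases hyt : gstar y = ⊤
    · rw [hyt]; exact le_top
    have hcy : gstar y = (((gstar y).toReal : ℝ) : EReal) :=
      (EReal.coe_toReal hyt (hnbgen y)).symm
    set cy : ℝ := (gstar y).toReal with hcydef
    rw [hcy]
    apply EReal.coe_le_coe_iff.mpr
    set d : EuclideanSpace ℝ (Fin m) := y - ystar with hd
    have hstep : ∀ t : ℝ, 0 < t → t ≤ 1 →
        cs ≤ (⟪d, Matrix.toEuclideanLin (A * P⁻¹ * Aᵀ) ystar⟫ - ⟪a, d⟫)
          + t * (1 / 2 * ⟪d, Matrix.toEuclideanLin (A * P⁻¹ * Aᵀ) d⟫) + cy := by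
      intro t ht ht1
      have hcv : gstar (ystar + t • d) ≤ (((1 - t) * cs + t * cy : ℝ) : EReal) := by
        rw [hgstar]
        refine iSup_le fun z => ?_
        rcases gcase hg_ne_bot z with h1 | ⟨r, h1⟩
        · rw [h1]; simp
        · rw [h1, ← EReal.coe_sub]
          apply EReal.coe_le_coe_iff.mpr
          have i1 := hFYgen ystar cs hgs z r h1
          have i2 := hFYgen y cy hcy z r h1
          rw [inner_add_right, real_inner_smul_right, hd, inner_sub_right]
          nlinarith [mul_le_mul_of_nonneg_left i1 (by linarith : (0:ℝ) ≤ 1 - t),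
            mul_le_mul_of_nonneg_left i2 ht.le]
      have h1 : ((1 / 2 * ⟪ystar, Matrix.toEuclideanLin (A * P⁻¹ * Aᵀ) ystar⟫
            - ⟪a, ystar⟫ : ℝ) : EReal) + ((cs : ℝ) : EReal)
          ≤ ((1 / 2 * ⟪ystar + t • d, Matrix.toEuclideanLin (A * P⁻¹ * Aᵀ) (ystar + t • d)⟫
            - ⟪a, ystar + t • d⟫ : ℝ) : EReal) + (((1 - t) * cs + t * cy : ℝ) : EReal) := by
        rw [← hgs]
        exact (hystar (ystar + t • d)).trans (add_le_add_right hcv _)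
      rw [← EReal.coe_add, ← EReal.coe_add] at h1
      have h2 := EReal.coe_le_coe_iff.mp h1
      have e1 : Matrix.toEuclideanLin (A * P⁻¹ * Aᵀ) (ystar + t • d)
          = Matrix.toEuclideanLin (A * P⁻¹ * Aᵀ) ystar
            + t • Matrix.toEuclideanLin (A * P⁻¹ * Aᵀ) d := by
        rw [map_add, _root_.map_smul]
      have e2 : ⟪ystar + t • d, Matrix.toEuclideanLin (A * P⁻¹ * Aᵀ) (ystar + t • d)⟫
          = ⟪ystar, Matrix.toEuclideanLin (A * P⁻¹ * Aᵀ) ystar⟫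
            + 2 * t * ⟪d, Matrix.toEuclideanLin (A * P⁻¹ * Aᵀ) ystar⟫
            + t ^ 2 * ⟪d, Matrix.toEuclideanLin (A * P⁻¹ * Aᵀ) d⟫ := by
        rw [e1, inner_add_left, inner_add_right, inner_add_right, real_inner_smul_left,
          real_inner_smul_left, real_inner_smul_right, real_inner_smul_right, hMsym ystar d]
        ring
      have e3 : ⟪a, ystar + t • d⟫ = ⟪a, ystar⟫ + t * ⟪a, d⟫ := by
        rw [inner_add_right, real_inner_smul_right]
      rw [e2, e3] at h2
      have h3 : t * cs ≤ t * ((⟪d, Matrix.toEuclideanLin (A * P⁻¹ * Aᵀ) ystar⟫ - ⟪a, d⟫)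
          + t * (1 / 2 * ⟪d, Matrix.toEuclideanLin (A * P⁻¹ * Aᵀ) d⟫) + cy) := by
        nlinarith [h2]
      exact (mul_le_mul_iff_right₀ ht).mp h3
    have hlim : cs ≤ (⟪d, Matrix.toEuclideanLin (A * P⁻¹ * Aᵀ) ystar⟫ - ⟪a, d⟫) + cy :=
      limit_aux hstep
    have hz1 : ⟪a - Matrix.toEuclideanLin (A * P⁻¹ * Aᵀ) ystar, d⟫
        = ⟪a, d⟫ - ⟪d, Matrix.toEuclideanLin (A * P⁻¹ * Aᵀ) ystar⟫ := by
      rw [inner_sub_left, real_inner_comm (Matrix.toEuclideanLin (A * P⁻¹ * Aᵀ) ystar) d]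
    have hz2 : ⟪a - Matrix.toEuclideanLin (A * P⁻¹ * Aᵀ) ystar, d⟫
        = ⟪a - Matrix.toEuclideanLin (A * P⁻¹ * Aᵀ) ystar, y⟫
          - ⟪a - Matrix.toEuclideanLin (A * P⁻¹ * Aᵀ) ystar, ystar⟫ := by
      rw [hd, inner_sub_right]
    linarith
  -- Fenchel equality at the candidate point
  have hge := fenchel_eq hg_ne_bot hg_lsc hg_convex h0 hgstar hgs hsub
  -- A xtilde equals the candidate point
  have hAxt : Matrix.toEuclideanLin A xtilde
      = a - Matrix.toEuclideanLin (A * P⁻¹ * Aᵀ) ystar := by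
    rw [hxtilde, map_sub, ha, hM, map_add, map_add, sub_sub]
  -- quadratic part
  have hLwt : Matrix.toEuclideanLin P (xtilde - x)
      = -(gradient f x + Matrix.toEuclideanLin Aᵀ ystar) := by
    rw [hxtilde]
    have h1 : x - Matrix.toEuclideanLin P⁻¹ (gradient f x + Matrix.toEuclideanLin Aᵀ ystar) - x
        = -(Matrix.toEuclideanLin P⁻¹ (gradient f x + Matrix.toEuclideanLin Aᵀ ystar)) := by
      abel
    rw [h1, map_neg, toEL_inv_cancel hP]
  have hexp : ⟪(x' - x) - (xtilde - x), Matrix.toEuclideanLin P ((x' - x) - (xtilde - x))⟫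
      = ⟪x' - x, Matrix.toEuclideanLin P (x' - x)⟫
        - 2 * ⟪xtilde - x, Matrix.toEuclideanLin P (x' - x)⟫
        + ⟪xtilde - x, Matrix.toEuclideanLin P (xtilde - x)⟫ := by
    rw [map_sub, inner_sub_left, inner_sub_right, inner_sub_right,
      show ⟪x' - x, Matrix.toEuclideanLin P (xtilde - x)⟫
          = ⟪xtilde - x, Matrix.toEuclideanLin P (x' - x)⟫ from by
        rw [hLsym2, real_inner_comm]]
    ring
  have hpos := posdef_inner_nonneg hP ((x' - x) - (xtilde - x))
  have hcore : ⟪gradient f x, xtilde - x⟫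
      + 1 / 2 * ⟪xtilde - x, Matrix.toEuclideanLin P (xtilde - x)⟫
      + ⟪Matrix.toEuclideanLin Aᵀ ystar, xtilde - x⟫
      ≤ ⟪gradient f x, x' - x⟫ + 1 / 2 * ⟪x' - x, Matrix.toEuclideanLin P (x' - x)⟫
      + ⟪Matrix.toEuclideanLin Aᵀ ystar, x' - x⟫ := by
    have c1 : ∀ v : EuclideanSpace ℝ (Fin n), ⟪gradient f x, v⟫
        + ⟪Matrix.toEuclideanLin Aᵀ ystar, v⟫
        = -⟪Matrix.toEuclideanLin P (xtilde - x), v⟫ := by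
      intro v
      rw [hLwt, inner_neg_left, inner_add_left, neg_neg]
    have c2 : ⟪Matrix.toEuclideanLin P (xtilde - x), xtilde - x⟫
        = ⟪xtilde - x, Matrix.toEuclideanLin P (xtilde - x)⟫ := real_inner_comm _ _
    have c3 : ⟪Matrix.toEuclideanLin P (xtilde - x), x' - x⟫
        = ⟪xtilde - x, Matrix.toEuclideanLin P (x' - x)⟫ := by
      rw [real_inner_comm, hLsym2, real_inner_comm]
    have d1 := c1 (xtilde - x)
    have d2 := c1 (x' - x)
    linarith
  -- inner product decompositions
  have j1 : ⟪a - Matrix.toEuclideanLin (A * P⁻¹ * Aᵀ) ystar, ystar⟫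
      = ⟪Matrix.toEuclideanLin Aᵀ ystar, xtilde - x⟫
        + ⟪Matrix.toEuclideanLin Aᵀ ystar, x⟫ := by
    rw [← hAxt, real_inner_comm, inner_toEL]
    calc ⟪Matrix.toEuclideanLin Aᵀ ystar, xtilde⟫
        = ⟪Matrix.toEuclideanLin Aᵀ ystar, (xtilde - x) + x⟫ := by
          congr 1
          abel
      _ = _ := inner_add_right _ _ _
  have j2 : ⟪Matrix.toEuclideanLin A x', ystar⟫
      = ⟪Matrix.toEuclideanLin Aᵀ ystar, x' - x⟫ + ⟪Matrix.toEuclideanLin Aᵀ ystar, x⟫ := by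
    rw [real_inner_comm, inner_toEL]
    calc ⟪Matrix.toEuclideanLin Aᵀ ystar, x'⟫
        = ⟪Matrix.toEuclideanLin Aᵀ ystar, (x' - x) + x⟫ := by
          congr 1
          abel
      _ = _ := inner_add_right _ _ _
  -- final assembly
  rw [hAxt]
  rcases gcase hg_ne_bot (Matrix.toEuclideanLin A x') with htop | ⟨r', hr'⟩
  · rw [htop, EReal.add_top_of_ne_bot (EReal.coe_ne_bot _)]
    exact le_top
  · rw [hr']
    have k2 := hFYgen ystar cs hgs (Matrix.toEuclideanLin A x') r' hr'
    rw [j2] at k2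
    calc ((⟪gradient f x, xtilde - x⟫
          + 1 / 2 * ⟪xtilde - x, Matrix.toEuclideanLin P (xtilde - x)⟫ : ℝ) : EReal)
          + g (a - Matrix.toEuclideanLin (A * P⁻¹ * Aᵀ) ystar)
        ≤ ((⟪gradient f x, xtilde - x⟫
          + 1 / 2 * ⟪xtilde - x, Matrix.toEuclideanLin P (xtilde - x)⟫ : ℝ) : EReal)
          + ((⟪a - Matrix.toEuclideanLin (A * P⁻¹ * Aᵀ) ystar, ystar⟫ - cs : ℝ) : EReal) :=
        add_le_add_right hge _
      _ = ((⟪gradient f x, xtilde - x⟫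
          + 1 / 2 * ⟪xtilde - x, Matrix.toEuclideanLin P (xtilde - x)⟫
          + (⟪a - Matrix.toEuclideanLin (A * P⁻¹ * Aᵀ) ystar, ystar⟫ - cs) : ℝ) : EReal) := by
        norm_cast
      _ ≤ ((⟪gradient f x, x' - x⟫
          + 1 / 2 * ⟪x' - x, Matrix.toEuclideanLin P (x' - x)⟫ + r' : ℝ) : EReal) := by
        apply EReal.coe_le_coe_iff.mpr
        rw [j1]
        linarith
      _ = _ := by
        norm_cast
end
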